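/- arXiv:2502.19254 — 8 statements merged into one kernel-verified Lean document; each statement's English description precedes it below -/
import Mathlib

section
/- Let n ≥ 1, let Z = X × Y with X a nonempty measurable space and Y a measurable space, let B : Z ↪ Y be a Markov kernel, and let E : Z^{n+1} → [0,∞] be a randomness e-variable. Then the function G defined by G(z_1,…,z_n,z_{n+1}) := e^{-1} ∫_Y [E(z_1,…,z_n,x_{n+1},y) / E^X(z_1,…,z_n,x_{n+1},y)] B(dy | z_{n+1}), where z_{n+1} = (x_{n+1},y_{n+1}) and the ratio 0/0 is set to 0, is a randomness e-variable. -/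
open MeasureTheory ProbabilityTheory
open scoped ENNReal NNReal

noncomputable section

/-- `E` is a *randomness e-variable*: a measurable nonnegative function on `Z^{n+1}` whose
integral is at most 1 under every product (IID) probability measure `Q^{n+1}`. -/
def IsRandE {Z : Type*} [MeasurableSpace Z] (n : ℕ) (E : (Fin (n+1) → Z) → ℝ≥0∞) : Prop :=
  Measurable E ∧
    ∀ (Q : Measure Z), IsProbabilityMeasure Q →
      ∫⁻ z, E z ∂(Measure.pi fun _ : Fin (n+1) => Q) ≤ 1

/-- A probability measure on `Z^{n+1}` is *exchangeable* if it is invariant under all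
permutations of the `n+1` coordinates. -/
def IsExchangeable {Z : Type*} [MeasurableSpace Z] (n : ℕ)
    (R : Measure (Fin (n+1) → Z)) : Prop :=
  ∀ π : Equiv.Perm (Fin (n+1)), Measure.map (fun z i => z (π i)) R = R

/-- `E` is an *exchangeability e-variable*: its integral is at most 1 under every
exchangeable probability measure on `Z^{n+1}`. -/
def IsExchE {Z : Type*} [MeasurableSpace Z] (n : ℕ) (E : (Fin (n+1) → Z) → ℝ≥0∞) : Prop :=
  Measurable E ∧
    ∀ (R : Measure (Fin (n+1) → Z)), IsProbabilityMeasure R → IsExchangeable n R →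
      ∫⁻ z, E z ∂(R) ≤ 1

/-- A function on `Z^{n+1}` is *train-invariant* if it is invariant under permutations of the
first `n` (training) examples. -/
def TrainInv {Z α : Type*} (n : ℕ) (E : (Fin (n+1) → Z) → α) : Prop :=
  ∀ (z : Fin (n+1) → Z) (σ : Equiv.Perm (Fin n)),
    E (Fin.snoc (fun i => z (Fin.castSucc (σ i))) (z (Fin.last n))) = E z

/-- `E^i`: the average of `E` over all permutations of the `n+1` examples. -/
def Ei {Z : Type*} (n : ℕ) (E : (Fin (n+1) → Z) → ℝ≥0∞) : (Fin (n+1) → Z) → ℝ≥0∞ :=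
  fun z => (∑ π : Equiv.Perm (Fin (n+1)), E (fun i => z (π i))) / (Nat.factorial (n+1) : ℝ≥0∞)

/-- `E^X := E / E^i`, with the convention `0/0 := 1`. -/
def EX {Z : Type*} (n : ℕ) (E : (Fin (n+1) → Z) → ℝ≥0∞) : (Fin (n+1) → Z) → ℝ≥0∞ :=
  fun z => if E z = 0 ∧ Ei n E z = 0 then 1 else E z / Ei n E z

/-- `E^t`: the average of `E` over all permutations of the `n` training examples. -/
def Et {Z : Type*} (n : ℕ) (E : (Fin (n+1) → Z) → ℝ≥0∞) : (Fin (n+1) → Z) → ℝ≥0∞ :=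
  fun z => (∑ σ : Equiv.Perm (Fin n),
      E (Fin.snoc (fun i => z (Fin.castSucc (σ i))) (z (Fin.last n)))) / (Nat.factorial n : ℝ≥0∞)

/-- Replace the label of the test (last) example by `y`, keeping the training examples and the
test object: this is `(z_1, …, z_n, (x_{n+1}, y))`. -/
def withLabel {X Y : Type*} (n : ℕ) (z : Fin (n+1) → X × Y) (y : Y) : Fin (n+1) → X × Y :=
  Fin.snoc (fun i : Fin n => z (Fin.castSucc i)) ((z (Fin.last n)).1, y)

section AuxLemmas

variable {Z : Type*} [MeasurableSpace Z] {n : ℕ} {E : (Fin (n+1) → Z) → ℝ≥0∞}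

theorem RandE.measurable_permComp (π : Equiv.Perm (Fin (n+1))) :
    Measurable (fun z : Fin (n+1) → Z => fun i => z (π i)) :=
  measurable_pi_lambda _ fun _ => measurable_pi_apply _

theorem RandE.Ei_measurable (hE : Measurable E) : Measurable (Ei n E) :=
  (Finset.measurable_sum _ fun π _ => hE.comp (RandE.measurable_permComp π)).div
    measurable_const

theorem RandE.EX_measurable (hE : Measurable E) : Measurable (EX n E) := by
  have hs : MeasurableSet {z : Fin (n+1) → Z | E z = 0 ∧ Ei n E z = 0} :=
    (hE (measurableSet_singleton 0)).inter
      ((RandE.Ei_measurable hE) (measurableSet_singleton 0))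
  exact Measurable.ite hs measurable_const (hE.div (RandE.Ei_measurable hE))

omit [MeasurableSpace Z] in
theorem RandE.Ei_perm (π : Equiv.Perm (Fin (n+1))) (z : Fin (n+1) → Z) :
    Ei n E (fun i => z (π i)) = Ei n E z := by
  unfold Ei
  congr 1
  exact Fintype.sum_equiv (Equiv.mulLeft π) _ _ fun π' => rfl

omit [MeasurableSpace Z] in
theorem RandE.div_EX_le (w : Fin (n+1) → Z) : E w / EX n E w ≤ Ei n E w := by
  unfold EX
  rcases eq_or_ne (E w) 0 with h0 | h0
  · simp [h0]
  rw [if_neg (fun h => h0 h.1)]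
  set a := E w; set b := Ei n E w
  rcases eq_or_ne a ⊤ with ha | ha
  · rcases eq_or_ne b ⊤ with hb | hb
    · simp [ha, hb]
    · simp [ha, ENNReal.top_div, hb]
  · rcases eq_or_ne b 0 with hb0 | hb0
    · simp [hb0, ENNReal.div_zero h0, ha]
    rcases eq_or_ne b ⊤ with hbt | hbt
    · simp [hbt, ENNReal.div_top, h0]
    · rw [ENNReal.div_eq_inv_mul, ENNReal.inv_div (Or.inr ha) (Or.inr h0),
        ENNReal.div_mul_cancel h0 ha]

theorem RandE.lintegral_perm (ν : Fin (n+1) → Measure Z) [∀ i, SigmaFinite (ν i)]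
    (g : (Fin (n+1) → Z) → ℝ≥0∞) (hg : Measurable g) (π : Equiv.Perm (Fin (n+1))) :
    ∫⁻ z, g (fun i => z (π i)) ∂(Measure.pi ν) = ∫⁻ z, g z ∂(Measure.pi fun i => ν (π i)) := by
  haveI : ∀ i, SigmaFinite ((fun i => ν (π i)) i) := fun i => inferInstance
  have h := (measurePreserving_piCongrLeft (α := fun _ : Fin (n+1) => Z)
      (fun i => ν (π i)) π.symm).lintegral_comp hg
  have h2 : (Measure.pi fun i' => (fun i => ν (π i)) (π.symm i')) = Measure.pi ν := by
    congr 1; ext i; simp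
  rw [h2] at h
  rw [← h]
  refine lintegral_congr fun z => ?_
  congr 1
  ext i
  have := MeasurableEquiv.piCongrLeft_apply_apply (β := fun _ : Fin (n+1) => Z) π.symm z (π i)
  simpa using this.symm

theorem RandE.Ei_int_le_one (hE : Measurable E)
    (hint : ∀ (Q : Measure Z), IsProbabilityMeasure Q →
      ∫⁻ z, E z ∂(Measure.pi fun _ : Fin (n+1) => Q) ≤ 1)
    (R : Measure Z) (hR : IsProbabilityMeasure R) :
    ∫⁻ z, Ei n E z ∂(Measure.pi fun _ : Fin (n+1) => R) ≤ 1 := by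
  unfold Ei
  simp only [div_eq_mul_inv]
  rw [lintegral_mul_const' _ _ (by simp [Nat.factorial_ne_zero])]
  have hsum : ∫⁻ z, (∑ π : Equiv.Perm (Fin (n+1)), E (fun i => z (π i)))
      ∂(Measure.pi fun _ : Fin (n+1) => R)
      ≤ (Nat.factorial (n+1) : ℝ≥0∞) := by
    rw [lintegral_finset_sum
      (f := fun (π : Equiv.Perm (Fin (n+1))) (z : Fin (n+1) → Z) => E (fun i => z (π i)))
      Finset.univ (fun π _ => hE.comp (RandE.measurable_permComp π))]
    calc ∑ π : Equiv.Perm (Fin (n+1)), ∫⁻ z, E (fun i => z (π i))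
          ∂(Measure.pi fun _ : Fin (n+1) => R)
        ≤ ∑ _π : Equiv.Perm (Fin (n+1)), 1 := by
          refine Finset.sum_le_sum fun π _ => ?_
          rw [RandE.lintegral_perm _ _ hE π]
          exact hint R hR
      _ = (Nat.factorial (n+1) : ℝ≥0∞) := by
          simp [Finset.card_univ, Fintype.card_perm]
  calc _ ≤ (Nat.factorial (n+1) : ℝ≥0∞) * (Nat.factorial (n+1) : ℝ≥0∞)⁻¹ :=
        mul_le_mul_left hsum _
    _ ≤ 1 := ENNReal.mul_inv_le_one _

theorem RandE.pi_add_expand (m : ℕ) (μ ν : Fin m → Measure Z) [∀ i, IsFiniteMeasure (μ i)]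
    [∀ i, IsFiniteMeasure (ν i)] :
    Measure.pi (fun i => μ i + ν i) =
      ∑ t : Finset (Fin m), Measure.pi (fun i => if i ∈ t then μ i else ν i) := by
  haveI : ∀ i, SigmaFinite ((fun i => μ i + ν i) i) := fun i => inferInstance
  refine Measure.pi_eq fun s hs => ?_
  rw [Measure.finset_sum_apply]
  have hpi : ∀ t : Finset (Fin m),
      (Measure.pi fun i => if i ∈ t then μ i else ν i) (Set.univ.pi s)
        = ∏ i, (if i ∈ t then μ i else ν i) (s i) := by
    intro t
    haveI : ∀ i, SigmaFinite ((fun i => if i ∈ t then μ i else ν i) i) := fun i => by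
      dsimp only; split <;> infer_instance
    exact Measure.pi_pi _ _
  simp only [hpi, Measure.add_apply]
  rw [Fintype.prod_add]
  refine Finset.sum_congr rfl fun t _ => ?_
  rw [← Finset.prod_mul_prod_compl t]
  congr 1
  · exact Finset.prod_congr rfl fun i hi => by simp [hi]
  · exact Finset.prod_congr rfl fun i hi => by simp [Finset.mem_compl.mp hi]

theorem RandE.pi_smul (m : ℕ) (c : Fin m → ℝ≥0) (μ : Fin m → Measure Z)
    [∀ i, IsProbabilityMeasure (μ i)] :
    Measure.pi (fun i => c i • μ i) = ((∏ i, c i : ℝ≥0) : ℝ≥0∞) • Measure.pi μ := by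
  haveI : ∀ i, SigmaFinite ((fun i => c i • μ i) i) := fun i => inferInstance
  refine Measure.pi_eq fun s hs => ?_
  simp only [Measure.pi_pi, Measure.smul_apply, ENNReal.smul_def, smul_eq_mul,
    ENNReal.coe_finset_prod, Finset.prod_mul_distrib]

theorem RandE.key (hn : 1 ≤ n) (Q P : Measure Z) [IsProbabilityMeasure Q]
    [IsProbabilityMeasure P]
    (f : (Fin (n+1) → Z) → ℝ≥0∞) (hf : Measurable f)
    (hsym : ∀ (π : Equiv.Perm (Fin (n+1))) z, f (fun i => z (π i)) = f z)
    (hint : ∀ (R : Measure Z), IsProbabilityMeasure R →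
      ∫⁻ z, f z ∂(Measure.pi fun _ : Fin (n+1) => R) ≤ 1) :
    ∫⁻ z, f z ∂(Measure.pi fun i => if i = Fin.last n then P else Q)
      ≤ ENNReal.ofReal (Real.exp 1) := by
  have hn1 : ((n : ℝ≥0) + 1) ≠ 0 := by positivity
  set a : ℝ≥0 := (n : ℝ≥0) / ((n : ℝ≥0) + 1) with ha_def
  set b : ℝ≥0 := 1 / ((n : ℝ≥0) + 1) with hb_def
  have hab : b + a = 1 := by
    rw [ha_def, hb_def, ← add_div, div_eq_one_iff_eq hn1]; ring
  set R : Measure Z := b • P + a • Q with hR_def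
  haveI : IsProbabilityMeasure R := by
    constructor
    simp only [hR_def, Measure.add_apply, Measure.smul_apply, measure_univ, smul_eq_mul, mul_one]
    simp [ENNReal.smul_def, ← ENNReal.coe_add, hab]
  set I := ∫⁻ z, f z ∂(Measure.pi fun i => if i = Fin.last n then P else Q) with hI_def
  have hIj : ∀ j : Fin (n+1),
      ∫⁻ z, f z ∂(Measure.pi fun i => if i = j then P else Q) = I := by
    intro j
    haveI : ∀ i : Fin (n+1), SigmaFinite ((fun i => if i = j then P else Q) i) := fun i => by
      dsimp only; split <;> infer_instance
    have := RandE.lintegral_perm (fun i => if i = j then P else Q) f hf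
      (Equiv.swap j (Fin.last n))
    have hfam : (fun i => if Equiv.swap j (Fin.last n) i = j then P else Q)
        = (fun i => if i = Fin.last n then P else Q) := by
      funext i
      congr 1
      rw [eq_iff_iff, Equiv.swap_apply_eq_iff, Equiv.swap_apply_left]
    rw [funext fun z => hsym (Equiv.swap j (Fin.last n)) z] at this
    rw [hI_def, ← hfam, ← this]
  have h1 : ∫⁻ z, f z ∂(Measure.pi fun _ : Fin (n+1) => R) ≤ 1 := hint R inferInstance
  rw [hR_def] at h1
  rw [RandE.pi_add_expand (n+1) (fun _ => b • P) (fun _ => a • Q)] at h1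
  rw [lintegral_finset_sum_measure] at h1
  have hsing : ∀ j : Fin (n+1),
      ∫⁻ z, f z ∂(Measure.pi fun i => if i ∈ ({j} : Finset (Fin (n+1))) then b • P else a • Q)
        = ((a ^ n * b : ℝ≥0) : ℝ≥0∞) * I := by
    intro j
    have hfam : (fun i : Fin (n+1) => if i ∈ ({j} : Finset (Fin (n+1))) then b • P else a • Q)
        = fun i => (if i = j then b else a) • (if i = j then P else Q) := by
      funext i
      by_cases h : i = j <;> simp [h]
    haveI : ∀ i : Fin (n+1), IsProbabilityMeasure ((fun i => if i = j then P else Q) i) :=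
      fun i => by dsimp only; split <;> infer_instance
    rw [hfam, RandE.pi_smul (n+1) _ _, lintegral_smul_measure, hIj j]
    congr 2
    rw [← Finset.mul_prod_erase Finset.univ _ (Finset.mem_univ j), if_pos rfl]
    rw [Finset.prod_congr rfl (fun i hi => if_neg (Finset.ne_of_mem_erase hi)),
      Finset.prod_const, Finset.card_erase_of_mem (Finset.mem_univ j), Finset.card_univ,
      Fintype.card_fin]
    simp [mul_comm]
  have h2 : ∑ j : Fin (n+1), (((a ^ n * b : ℝ≥0) : ℝ≥0∞) * I) ≤ 1 := by
    calc ∑ j : Fin (n+1), (((a ^ n * b : ℝ≥0) : ℝ≥0∞) * I)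
        = ∑ t ∈ Finset.univ.image (fun j : Fin (n+1) => ({j} : Finset (Fin (n+1)))),
            ∫⁻ z, f z ∂(Measure.pi fun i => if i ∈ t then b • P else a • Q) := by
          rw [Finset.sum_image (by intro x _ y _ h; exact Finset.singleton_injective h)]
          exact (Finset.sum_congr rfl fun j _ => (hsing j).symm)
      _ ≤ ∑ t : Finset (Fin (n+1)),
            ∫⁻ z, f z ∂(Measure.pi fun i => if i ∈ t then b • P else a • Q) :=
          Finset.sum_le_sum_of_subset (Finset.subset_univ _)
      _ ≤ 1 := h1
  rw [Finset.sum_const, Finset.card_univ, Fintype.card_fin] at h2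
  have ha0 : a ≠ 0 := by
    rw [ha_def]
    have : (0:ℝ≥0) < n := by exact_mod_cast Nat.pos_of_ne_zero (by omega)
    positivity
  rw [nsmul_eq_mul] at h2
  have hb1 : b * ((n:ℝ≥0) + 1) = 1 := by
    rw [hb_def]; field_simp
  have hsimp : ((n+1:ℕ) : ℝ≥0∞) * (((a ^ n * b : ℝ≥0) : ℝ≥0∞) * I)
      = ((a ^ n : ℝ≥0) : ℝ≥0∞) * I := by
    rw [← mul_assoc]
    congr 1
    rw [show ((n+1:ℕ) : ℝ≥0∞) = (((n:ℝ≥0) + 1 : ℝ≥0) : ℝ≥0∞) by push_cast; ring,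
      ← ENNReal.coe_mul]
    congr 1
    rw [mul_comm (a^n) b, ← mul_assoc, mul_comm ((n:ℝ≥0)+1) b, hb1, one_mul]
  rw [hsimp] at h2
  have hI2 : I ≤ (((a ^ n : ℝ≥0) : ℝ≥0∞))⁻¹ :=
    ENNReal.le_inv_iff_mul_le.mpr (by rwa [mul_comm])
  refine hI2.trans ?_
  rw [← ENNReal.coe_inv (pow_ne_zero n ha0), ← ENNReal.ofReal_coe_nnreal]
  refine ENNReal.ofReal_le_ofReal ?_
  have hnR : (0:ℝ) < n := by exact_mod_cast (by omega : 0 < n)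
  have hcoe : (((a ^ n)⁻¹ : ℝ≥0) : ℝ) = (1 + 1/(n:ℝ)) ^ n := by
    push_cast [ha_def]
    rw [← inv_pow]
    congr 1
    rw [inv_div]
    field_simp
  rw [hcoe]
  calc (1 + 1/(n:ℝ)) ^ n ≤ (Real.exp (1/(n:ℝ))) ^ n := by
        refine pow_le_pow_left₀ (by positivity) ?_ n
        have := Real.add_one_le_exp (1/(n:ℝ))
        linarith
    _ = Real.exp 1 := by
        rw [← Real.exp_nat_mul]
        congr 1
        field_simp

theorem RandE.measurable_snocPair :
    Measurable (fun p : (Fin n → Z) × Z => (Fin.snoc p.1 p.2 : Fin (n+1) → Z)) := by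
  refine measurable_pi_iff.mpr fun i => ?_
  induction i using Fin.lastCases with
  | last => simpa [Fin.snoc_last] using measurable_snd
  | cast j =>
    simp only [Fin.snoc_castSucc]
    exact (measurable_pi_apply j).comp measurable_fst

theorem RandE.transport (Q P : Measure Z) [IsProbabilityMeasure Q] [IsProbabilityMeasure P]
    (f : (Fin (n+1) → Z) → ℝ≥0∞) (hf : Measurable f) :
    ∫⁻ z, f z ∂(Measure.pi fun i => if i = Fin.last n then P else Q)
      = ∫⁻ w, (∫⁻ t, f (Fin.snoc t w) ∂(Measure.pi fun _ : Fin n => Q)) ∂P := by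
  set ν := fun i : Fin (n+1) => if i = Fin.last n then P else Q with hν
  haveI : ∀ i, SigmaFinite (ν i) := fun i => by
    rw [hν]; dsimp only; split <;> infer_instance
  have mp := measurePreserving_piFinSuccAbove ν (Fin.last n)
  set e := MeasurableEquiv.piFinSuccAbove (fun _ : Fin (n+1) => Z) (Fin.last n) with he
  have h := (mp.symm e).lintegral_comp hf
  rw [← h]
  have hmeas : (ν (Fin.last n)).prod (Measure.pi fun j => ν ((Fin.last n).succAbove j))
      = P.prod (Measure.pi fun _ : Fin n => Q) := by
    congr 1
    · simp [hν]
    · congr 1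
      funext j
      simp [hν, Fin.succAbove_last, (Fin.castSucc_lt_last j).ne]
  rw [hmeas]
  rw [lintegral_prod (fun p : Z × (Fin n → Z) => f (e.symm p))
    ((hf.comp e.symm.measurable).aemeasurable)]
  refine lintegral_congr fun w => lintegral_congr fun t => ?_
  congr 1
  show e.symm (w, t) = Fin.snoc t w
  rw [he]
  simp [MeasurableEquiv.piFinSuccAbove, Fin.insertNthEquiv, Fin.insertNth_last']

end AuxLemmas

/-- Theorem 1 (Kolmogorov-type result): for any Markov kernel `B : Z ↪ Y` and any randomness
e-variable `E` on `Z^{n+1}` (`Z = X × Y`), the function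
`G(z_1,…,z_n,z_{n+1}) := e⁻¹ ∫ (E(z_1,…,z_n,x_{n+1},y) / E^X(z_1,…,z_n,x_{n+1},y)) B(dy|z_{n+1})`
(with `0/0 := 0`, as for `ℝ≥0∞` division) is again a randomness e-variable. -/
theorem stmt0 {X Y : Type*} [MeasurableSpace X] [Nonempty X] [MeasurableSpace Y]
    (n : ℕ) (hn : 1 ≤ n) (B : Kernel (X × Y) Y) [IsMarkovKernel B]
    (E : (Fin (n+1) → X × Y) → ℝ≥0∞) (hE : IsRandE n E) :
    IsRandE n (fun z =>
      ENNReal.ofReal (Real.exp (-1)) *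
        ∫⁻ y, E (withLabel n z y) / EX n E (withLabel n z y) ∂(B (z (Fin.last n)))) := by
  obtain ⟨hEm, hEint⟩ := hE
  -- measurability of `withLabel` jointly
  have hwl : Measurable (fun p : (Fin (n+1) → X × Y) × Y => withLabel n p.1 p.2) := by
    unfold withLabel
    refine measurable_pi_iff.mpr fun i => ?_
    induction i using Fin.lastCases with
    | last =>
      simp only [Fin.snoc_last]
      exact (((measurable_pi_apply _).comp measurable_fst).fst).prodMk measurable_snd
    | cast j =>
      simp only [Fin.snoc_castSucc]
      exact (measurable_pi_apply _).comp measurable_fst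
  have hF : Measurable (fun w : Fin (n+1) → X × Y => E w / EX n E w) :=
    hEm.div (RandE.EX_measurable hEm)
  have hEi : Measurable (Ei n E) := RandE.Ei_measurable hEm
  -- the kernel `z ↦ B (z (last n))`
  set κ : Kernel (Fin (n+1) → X × Y) Y := B.comap (fun z => z (Fin.last n)) (measurable_pi_apply _)
    with hκ
  have hκap : ∀ z : Fin (n+1) → X × Y, B (z (Fin.last n)) = κ z := fun z => rfl
  have hGm : Measurable (fun z : Fin (n+1) → X × Y =>
      ∫⁻ y, E (withLabel n z y) / EX n E (withLabel n z y) ∂(B (z (Fin.last n)))) := by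
    simp only [hκap]
    exact Measurable.lintegral_kernel_prod_right (hF.comp hwl)
  constructor
  · exact measurable_const.mul hGm
  intro Q hQ
  set Qn1 := (Measure.pi fun _ : Fin (n+1) => Q) with hQn1
  set Qn := (Measure.pi fun _ : Fin n => Q) with hQn
  rw [lintegral_const_mul _ hGm]
  -- pointwise bound by Ei
  have hgm : Measurable (fun z : Fin (n+1) → X × Y =>
      ∫⁻ y, Ei n E (withLabel n z y) ∂(B (z (Fin.last n)))) := by
    simp only [hκap]
    exact Measurable.lintegral_kernel_prod_right (hEi.comp hwl)
  have hmono : ∫⁻ z, (∫⁻ y, E (withLabel n z y) / EX n E (withLabel n z y)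
        ∂(B (z (Fin.last n)))) ∂Qn1
      ≤ ∫⁻ z, (∫⁻ y, Ei n E (withLabel n z y) ∂(B (z (Fin.last n)))) ∂Qn1 :=
    lintegral_mono fun z => lintegral_mono fun y => RandE.div_EX_le _
  -- the measure P: distribution of (x_{n+1}, y) with z_{n+1} ~ Q, y ~ B(z_{n+1})
  set P : Measure (X × Y) := ((Q.compProd B)).map (fun p : (X × Y) × Y => (p.1.1, p.2)) with hP
  have hmapm : Measurable (fun p : (X × Y) × Y => (p.1.1, p.2)) :=
    measurable_fst.fst.prodMk measurable_snd
  haveI : IsProbabilityMeasure (Q.compProd B) := inferInstance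
  haveI : IsProbabilityMeasure P := Measure.isProbabilityMeasure_map hmapm.aemeasurable
  -- h : the inner integral over training examples
  set h : X × Y → ℝ≥0∞ := fun v => ∫⁻ t, Ei n E (Fin.snoc t v) ∂Qn with hh
  have hsnoc : Measurable (fun p : (Fin n → X × Y) × (X × Y) => (Fin.snoc p.1 p.2 : Fin (n+1) → X × Y)) :=
    RandE.measurable_snocPair
  have hhm : Measurable h := by
    rw [hh]
    exact Measurable.lintegral_prod_right
      (f := fun (v : X × Y) (t : Fin n → X × Y) => Ei n E (Fin.snoc t v))
      (hEi.comp (hsnoc.comp (measurable_snd.prodMk measurable_fst)))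
  -- Step A: J = ∫ h dP
  have hwl2 : ∀ (t : Fin n → X × Y) (w : X × Y) (y : Y),
      withLabel n (Fin.snoc t w) y = Fin.snoc t (w.1, y) := by
    intro t w y
    unfold withLabel
    funext i
    simp [Fin.snoc_castSucc]
  have hJ : ∫⁻ z, (∫⁻ y, Ei n E (withLabel n z y) ∂(B (z (Fin.last n)))) ∂Qn1
      = ∫⁻ v, h v ∂P := by
    -- split off the last coordinate
    have mp := measurePreserving_piFinSuccAbove (fun _ : Fin (n+1) => Q) (Fin.last n)
    set e := MeasurableEquiv.piFinSuccAbove (fun _ : Fin (n+1) => X × Y) (Fin.last n) with he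
    have hg : Measurable (fun z : Fin (n+1) → X × Y =>
        ∫⁻ y, Ei n E (withLabel n z y) ∂(B (z (Fin.last n)))) := hgm
    have step1 := (mp.symm e).lintegral_comp hg
    have hesymm : ∀ p : (X × Y) × (Fin n → X × Y), e.symm p = Fin.snoc p.2 p.1 := by
      intro p
      rw [he]
      simp [MeasurableEquiv.piFinSuccAbove, Fin.insertNthEquiv, Fin.insertNth_last']
    rw [← step1]
    have hprodm : (Q.prod (Measure.pi fun j : Fin n =>
        (fun _ : Fin (n+1) => Q) ((Fin.last n).succAbove j))) = Q.prod Qn := rfl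
    rw [hprodm]
    -- rewrite the integrand
    have hint1 : ∀ p : (X × Y) × (Fin n → X × Y),
        (∫⁻ y, Ei n E (withLabel n (e.symm p) y) ∂(B ((e.symm p) (Fin.last n))))
          = ∫⁻ y, Ei n E (Fin.snoc p.2 (p.1.1, y)) ∂(B p.1) := by
      intro p
      rw [hesymm p]
      simp only [Fin.snoc_last]
      refine lintegral_congr fun y => ?_
      rw [hwl2]
    calc ∫⁻ p, (∫⁻ y, Ei n E (withLabel n (e.symm p) y) ∂(B ((e.symm p) (Fin.last n))))
          ∂(Q.prod Qn)
        = ∫⁻ p, (∫⁻ y, Ei n E (Fin.snoc p.2 (p.1.1, y)) ∂(B p.1)) ∂(Q.prod Qn) :=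
          lintegral_congr hint1
      _ = ∫⁻ w, ∫⁻ t, (∫⁻ y, Ei n E (Fin.snoc t (w.1, y)) ∂(B w)) ∂Qn ∂Q := by
          refine lintegral_prod _ ?_
          refine Measurable.aemeasurable ?_
          refine Measurable.lintegral_kernel_prod_right
            (κ := B.comap (fun p : (X × Y) × (Fin n → X × Y) => p.1) measurable_fst) ?_
          -- function : ((w,t), y) ↦ Ei (snoc t (w.1, y))
          exact hEi.comp (hsnoc.comp ((measurable_fst.snd).prodMk
            ((measurable_fst.fst.fst).prodMk measurable_snd)))
      _ = ∫⁻ w, ∫⁻ y, (∫⁻ t, Ei n E (Fin.snoc t (w.1, y)) ∂Qn) ∂(B w) ∂Q := by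
          refine lintegral_congr fun w => ?_
          refine lintegral_lintegral_swap ?_
          refine Measurable.aemeasurable ?_
          exact hEi.comp (hsnoc.comp (measurable_fst.prodMk
            (measurable_const.prodMk measurable_snd)))
      _ = ∫⁻ w, ∫⁻ y, h (w.1, y) ∂(B w) ∂Q := rfl
      _ = ∫⁻ p, h (p.1.1, p.2) ∂(Q.compProd B) :=
          (Measure.lintegral_compProd (hhm.comp hmapm)).symm
      _ = ∫⁻ v, h v ∂P := by
          rw [hP, lintegral_map hhm hmapm]
  -- Step B: ∫ h dP = ∫ Ei d(pi mix) ≤ e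
  have htrans := RandE.transport Q P (Ei n E) hEi
  have hkey := RandE.key hn Q P (Ei n E) hEi (fun π z => RandE.Ei_perm π z)
    (fun R hR => RandE.Ei_int_le_one hEm hEint R hR)
  calc ENNReal.ofReal (Real.exp (-1)) *
        ∫⁻ z, (∫⁻ y, E (withLabel n z y) / EX n E (withLabel n z y)
          ∂(B (z (Fin.last n)))) ∂Qn1
      ≤ ENNReal.ofReal (Real.exp (-1)) *
        ∫⁻ z, (∫⁻ y, Ei n E (withLabel n z y) ∂(B (z (Fin.last n)))) ∂Qn1 :=
        mul_le_mul_right hmono _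
    _ = ENNReal.ofReal (Real.exp (-1)) * ∫⁻ v, h v ∂P := by rw [hJ]
    _ = ENNReal.ofReal (Real.exp (-1)) *
        ∫⁻ z, Ei n E z ∂(Measure.pi fun i => if i = Fin.last n then P else Q) := by
        rw [htrans]
    _ ≤ ENNReal.ofReal (Real.exp (-1)) * ENNReal.ofReal (Real.exp 1) :=
        mul_le_mul_right hkey _
    _ = 1 := by
        rw [← ENNReal.ofReal_mul (Real.exp_pos _).le, ← Real.exp_add]
        norm_num

end
end

section
/- The constant e^{-1} in the preceding result is optimal: for every constant c > e^{-1} there exist an integer n ≥ 1, a one-point object space X, the label space Y = {-1,1}, the Markov kernel B with B({-y} | (x,y)) = 1, and a train-invariant randomness e-variable E on (X×Y)^{n+1} such that the function G(z_1,…,z_n,z_{n+1}) := c · E(z_1,…,z_n,x_{n+1},-y_{n+1}) / E^X(z_1,…,z_n,x_{n+1},-y_{n+1}) (with 0/0 := 0 and z_{n+1} = (x_{n+1},y_{n+1})) is not a randomness e-variable, i.e., there is a probability measure Q on X×Y with ∫ G dQ^{n+1} > 1. -/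
open MeasureTheory ProbabilityTheory
open scoped ENNReal NNReal

noncomputable section

instance : MeasurableSpace ℤˣ := ⊤

instance : MeasurableSingletonClass ℤˣ := ⟨fun _ => trivial⟩

/-- `t e^{-t} ≤ e^{-1}` for `t ≥ 0`. -/
lemma aux_texp {t : ℝ} (ht : 0 ≤ t) : t * Real.exp (-t) ≤ Real.exp (-1) := by
  have h := Real.add_one_le_exp (t - 1)
  calc t * Real.exp (-t) ≤ Real.exp (t - 1) * Real.exp (-t) :=
        mul_le_mul_of_nonneg_right (by linarith) (Real.exp_nonneg _)
    _ = Real.exp (-1) := by rw [← Real.exp_add]; ring_nf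

/-- `n e · p^n (1-p) ≤ 1` on `[0,1]`. -/
lemma aux_bound (n : ℕ) (p : ℝ) (hp0 : 0 ≤ p) (hp1 : p ≤ 1) :
    (n : ℝ) * Real.exp 1 * (p ^ n * (1 - p)) ≤ 1 := by
  have hq : 0 ≤ 1 - p := by linarith
  have h1 : p ^ n ≤ Real.exp (-((n : ℝ) * (1 - p))) := by
    have hp : p ≤ Real.exp (p - 1) := by
      have := Real.add_one_le_exp (p - 1); linarith
    calc p ^ n ≤ Real.exp (p - 1) ^ n := pow_le_pow_left₀ hp0 hp n
      _ = Real.exp ((n : ℝ) * (p - 1)) := by rw [← Real.exp_nat_mul]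
      _ = Real.exp (-((n : ℝ) * (1 - p))) := by ring_nf
  have h2 := aux_texp (t := (n : ℝ) * (1 - p)) (by positivity)
  calc (n : ℝ) * Real.exp 1 * (p ^ n * (1 - p))
      ≤ (n : ℝ) * Real.exp 1 * (Real.exp (-((n : ℝ) * (1 - p))) * (1 - p)) := by
        have hmul : p ^ n * (1 - p) ≤ Real.exp (-((n : ℝ) * (1 - p))) * (1 - p) :=
          mul_le_mul_of_nonneg_right h1 hq
        have hnn : (0:ℝ) ≤ (n : ℝ) * Real.exp 1 := by positivity
        exact mul_le_mul_of_nonneg_left hmul hnn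
    _ = Real.exp 1 * (((n : ℝ) * (1 - p)) * Real.exp (-((n : ℝ) * (1 - p)))) := by ring
    _ ≤ Real.exp 1 * Real.exp (-1) := mul_le_mul_of_nonneg_left h2 (Real.exp_nonneg _)
    _ = 1 := by rw [← Real.exp_add]; simp

/-- product of Dirac measures is Dirac. -/
lemma aux_pi_dirac {ι : Type*} [Fintype ι] {α : Type*} [MeasurableSpace α] (x : α) :
    Measure.pi (fun _ : ι => Measure.dirac x) = Measure.dirac (fun _ : ι => x) := by
  refine Measure.pi_eq fun s hs => ?_
  rw [Measure.dirac_apply' _ (MeasurableSet.univ_pi hs)]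
  by_cases h : ∀ i, x ∈ s i
  · rw [Set.indicator_of_mem (by simpa [Set.mem_univ_pi] using h), Pi.one_apply]
    exact (Finset.prod_eq_one fun i _ => by
      rw [Measure.dirac_apply' _ (hs i), Set.indicator_of_mem (h i), Pi.one_apply]).symm
  · push_neg at h
    obtain ⟨i, hi⟩ := h
    rw [Set.indicator_of_notMem (by simp [Set.mem_univ_pi]; exact ⟨i, hi⟩)]
    exact (Finset.prod_eq_zero (Finset.mem_univ i)
      (by rw [Measure.dirac_apply' _ (hs i), Set.indicator_of_notMem hi])).symm

/-- Optimality of the constant `e⁻¹`: for every `c > e⁻¹` there are `n ≥ 1`, a one-point object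
space `X = Unit`, label space `Y = {-1,1}` (realized as `ℤˣ`), the label-flipping Markov kernel,
and a train-invariant randomness e-variable `E` such that
`G(z_1,…,z_{n+1}) := c · E(z_1,…,z_n,x_{n+1},-y_{n+1}) / E^X(z_1,…,z_n,x_{n+1},-y_{n+1})`
is not a randomness e-variable: some power probability measure gives it integral `> 1`. -/
theorem stmt1 (c : ℝ) (hc : (Real.exp 1)⁻¹ < c) :
    ∃ n : ℕ, 1 ≤ n ∧
      ∃ E : (Fin (n+1) → Unit × ℤˣ) → ℝ≥0∞, IsRandE n E ∧ TrainInv n E ∧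
        ∃ Q : Measure (Unit × ℤˣ), IsProbabilityMeasure Q ∧
          1 < ∫⁻ z, ENNReal.ofReal c *
                (E (withLabel n z (-(z (Fin.last n)).2)) /
                  EX n E (withLabel n z (-(z (Fin.last n)).2)))
              ∂(Measure.pi fun _ : Fin (n+1) => Q) := by
  have he : 0 < Real.exp 1 := Real.exp_pos 1
  have hc0 : 0 < c := lt_trans (by positivity) hc
  have hce : 1 < c * Real.exp 1 := by
    have h := mul_lt_mul_of_pos_right hc he
    rwa [inv_mul_cancel₀ he.ne'] at h
  set n : ℕ := ⌈(c * Real.exp 1 - 1)⁻¹⌉₊ + 1 with hn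
  have hn1 : 1 ≤ n := Nat.le_add_left 1 _
  have hnpos : (0:ℝ) < (n:ℝ) := by exact_mod_cast Nat.lt_of_lt_of_le Nat.zero_lt_one hn1
  have hkey : (n : ℝ) + 1 < c * ((n : ℝ) * Real.exp 1) := by
    have h2 : 0 < c * Real.exp 1 - 1 := by linarith
    have h1 : (c * Real.exp 1 - 1)⁻¹ < (n : ℝ) := by
      have hceil := Nat.le_ceil (c * Real.exp 1 - 1)⁻¹
      have : (⌈(c * Real.exp 1 - 1)⁻¹⌉₊ : ℝ) < (n : ℝ) := by
        rw [hn]; push_cast; linarith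
      linarith
    have h5 := mul_lt_mul_of_pos_right h1 h2
    rw [inv_mul_cancel₀ h2.ne'] at h5
    nlinarith
  clear_value n
  refine ⟨n, hn1, ?_⟩
  set a : ℝ≥0∞ := ENNReal.ofReal ((n : ℝ) * Real.exp 1) with ha
  have ha0 : a ≠ 0 := (ENNReal.ofReal_pos.mpr (mul_pos hnpos he)).ne'
  have hat : a ≠ ∞ := ENNReal.ofReal_ne_top
  set w₀ : Fin (n+1) → Unit × ℤˣ :=
    fun i => if i = Fin.last n then ((), -1) else ((), 1) with hw₀
  have hwcs : ∀ j : Fin n, w₀ (Fin.castSucc j) = ((), 1) := fun j => by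
    simp [hw₀, (Fin.castSucc_lt_last j).ne]
  have hwlast : w₀ (Fin.last n) = ((), -1) := by simp [hw₀]
  have hne : (((), 1) : Unit × ℤˣ) ≠ ((), -1) := by
    intro h
    have h2 : (1 : ℤˣ) = -1 := congrArg Prod.snd h
    have h3 : (1 : ℤ) = -1 := congrArg Units.val h2
    norm_num at h3
  set E : (Fin (n+1) → Unit × ℤˣ) → ℝ≥0∞ := fun z => if z = w₀ then a else 0 with hE
  have hchar : ∀ z : Fin (n+1) → Unit × ℤˣ,
      z = w₀ ↔ (∀ j : Fin n, z (Fin.castSucc j) = ((), 1)) ∧ z (Fin.last n) = ((), -1) := by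
    intro z
    constructor
    · rintro rfl; exact ⟨hwcs, hwlast⟩
    · rintro ⟨h1, h2⟩
      funext i
      refine Fin.lastCases ?_ (fun j => ?_) i
      · rw [h2, hwlast]
      · rw [h1 j, hwcs j]
  have hmeas : Measurable E := by
    rw [hE]
    exact Measurable.ite (measurableSet_eq) measurable_const measurable_const
  have htinv : TrainInv n E := by
    intro z σ
    have hiff : (Fin.snoc (fun i => z (Fin.castSucc (σ i))) (z (Fin.last n))
        : Fin (n+1) → Unit × ℤˣ) = w₀ ↔ z = w₀ := by
      rw [hchar, hchar]
      constructor
      · rintro ⟨h1, h2⟩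
        rw [Fin.snoc_last] at h2
        refine ⟨fun j => ?_, h2⟩
        have := h1 (σ.symm j)
        rwa [Fin.snoc_castSucc, Equiv.apply_symm_apply] at this
      · rintro ⟨h1, h2⟩
        refine ⟨fun j => ?_, by rwa [Fin.snoc_last]⟩
        rw [Fin.snoc_castSucc]; exact h1 (σ j)
    simp only [hE]
    exact if_congr hiff rfl rfl
  have hEw : E w₀ = a := by simp [hE]
  -- the integral of E under any power measure
  have hrand : IsRandE n E := by
    refine ⟨hmeas, fun Q hQ => ?_⟩
    have hEind : E = Set.indicator {w₀} (fun _ => a) := by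
      funext z; simp [hE, Set.indicator_apply]
    rw [hEind, lintegral_indicator (measurableSet_singleton w₀), setLIntegral_const]
    have hsing : ({w₀} : Set (Fin (n+1) → Unit × ℤˣ)) = Set.pi Set.univ (fun i => {w₀ i}) := by
      ext z; simp [Set.mem_univ_pi, funext_iff, eq_comm]
    rw [hsing, Measure.pi_pi]
    set p := Q {(((), 1) : Unit × ℤˣ)} with hp
    have hp1 : p ≤ 1 := prob_le_one
    have hpt : p ≠ ∞ := (lt_of_le_of_lt hp1 ENNReal.one_lt_top).ne
    have hcompl : ({(((), 1) : Unit × ℤˣ)}ᶜ : Set (Unit × ℤˣ)) = {((), -1)} := by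
      ext x
      obtain ⟨u, v⟩ := x
      obtain rfl : u = () := rfl
      rcases Int.units_eq_one_or v with rfl | rfl
      · simp [hne]
      · simp [Ne.symm hne, hne.symm]
    have hQm : Q {(((), -1) : Unit × ℤˣ)} = 1 - p := by
      rw [← hcompl, prob_compl_eq_one_sub (measurableSet_singleton _)]
    have hj : ∀ j : Fin n, Q {w₀ (Fin.castSucc j)} = p := fun j => by rw [hwcs]
    have hprod : (∏ i : Fin (n+1), Q {w₀ i}) = p ^ n * (1 - p) := by
      rw [Fin.prod_univ_castSucc, hwlast, hQm,
        Finset.prod_congr rfl fun j _ => hj j, Finset.prod_const, Finset.card_univ,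
        Fintype.card_fin]
    rw [hprod]
    -- convert to reals
    set pr := p.toReal with hpr
    have hpr0 : 0 ≤ pr := ENNReal.toReal_nonneg
    have hpr1 : pr ≤ 1 := by
      have := ENNReal.toReal_mono (by simp) hp1
      simpa using this
    have hpof : p = ENNReal.ofReal pr := (ENNReal.ofReal_toReal hpt).symm
    have h1p : (1 : ℝ≥0∞) - p = ENNReal.ofReal (1 - pr) := by
      rw [hpof, ENNReal.ofReal_sub _ hpr0, ENNReal.ofReal_one]
    rw [h1p, hpof, ha, ← ENNReal.ofReal_pow hpr0, ← ENNReal.ofReal_mul (by positivity),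
      ← ENNReal.ofReal_mul (by positivity)]
    exact ENNReal.ofReal_le_one.mpr (aux_bound n pr hpr0 hpr1)
  -- compute Ei at w₀
  have hval_iff : ∀ π : Equiv.Perm (Fin (n+1)),
      E (fun i => w₀ (π i)) = if π (Fin.last n) = Fin.last n then a else 0 := by
    intro π
    simp only [hE]
    refine if_congr ?_ rfl rfl
    rw [hchar]
    constructor
    · rintro ⟨h1, h2⟩
      by_contra hx
      rw [show w₀ (π (Fin.last n)) = ((), 1) from by simp [hw₀, hx]] at h2
      exact hne h2
    · intro hlast
      refine ⟨fun j => ?_, by rw [hlast, hwlast]⟩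
      have hj : π (Fin.castSucc j) ≠ Fin.last n := by
        intro h
        exact (Fin.castSucc_lt_last j).ne (π.injective (h.trans hlast.symm))
      simp [hw₀, hj]
  have hsum : (∑ π : Equiv.Perm (Fin (n+1)), E (fun i => w₀ (π i)))
      = (n.factorial : ℝ≥0∞) * a := by
    rw [Finset.sum_congr rfl fun π _ => hval_iff π]
    -- reindex by conjugation with rev so the condition is about 0
    have hstep : (∑ π : Equiv.Perm (Fin (n+1)),
        (if π (Fin.last n) = Fin.last n then a else (0:ℝ≥0∞)))
        = ∑ π : Equiv.Perm (Fin (n+1)), (if π 0 = 0 then a else 0) := by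
      refine Fintype.sum_bijective
        (fun π => Fin.revPerm * π * Fin.revPerm)
        (((Equiv.mulRight Fin.revPerm).trans (Equiv.mulLeft Fin.revPerm)).bijective)
        _ _ (fun π => ?_)
      have h0 : (Fin.revPerm * π * Fin.revPerm : Equiv.Perm (Fin (n+1))) 0
          = Fin.rev (π (Fin.last n)) := by
        simp [Equiv.Perm.mul_apply, Fin.rev_zero]
      rw [h0]
      refine if_congr ?_ rfl rfl
      rw [← Fin.rev_last n]
      exact (Fin.rev_injective.eq_iff).symm
    rw [hstep, ← Equiv.sum_comp (Equiv.Perm.decomposeFin.symm :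
        Fin (n+1) × Equiv.Perm (Fin n) ≃ Equiv.Perm (Fin (n+1)))
      (fun π => if π 0 = 0 then a else 0)]
    have hpe : ∀ pe : Fin (n+1) × Equiv.Perm (Fin n),
        (if (Equiv.Perm.decomposeFin.symm pe) 0 = 0 then a else (0:ℝ≥0∞))
          = if pe.1 = 0 then a else 0 := fun pe => by
      rw [Equiv.Perm.decomposeFin_symm_apply_zero pe.1 pe.2]
    rw [Finset.sum_congr rfl fun pe _ => hpe pe, Fintype.sum_prod_type]
    have hpsum : ∀ p : Fin (n+1), (∑ _σ : Equiv.Perm (Fin n),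
        (if p = 0 then a else (0:ℝ≥0∞))) = if p = 0 then (n.factorial : ℝ≥0∞) * a else 0 := by
      intro p
      by_cases hp : p = 0 <;>
        simp [hp, Finset.sum_const, Finset.card_univ, Fintype.card_perm, Fintype.card_fin,
          mul_comm]
    rw [Finset.sum_congr rfl fun p _ => hpsum p, Finset.sum_ite_eq' Finset.univ (0 : Fin (n+1))]
    simp
  have hEi : Ei n E w₀ = a / ((n : ℝ≥0∞) + 1) := by
    show (∑ π : Equiv.Perm (Fin (n+1)), E (fun i => w₀ (π i))) / ((n+1).factorial : ℝ≥0∞)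
      = a / ((n : ℝ≥0∞) + 1)
    rw [hsum, Nat.factorial_succ, Nat.cast_mul, Nat.cast_add, Nat.cast_one,
      mul_comm ((n : ℝ≥0∞) + 1) (n.factorial : ℝ≥0∞), ENNReal.mul_div_mul_left _ _
      (Nat.cast_ne_zero.mpr n.factorial_ne_zero) (ENNReal.natCast_ne_top _)]
  have hEX : EX n E w₀ = (n : ℝ≥0∞) + 1 := by
    have hn1t : ((n : ℝ≥0∞) + 1) ≠ ∞ := by
      simp [ENNReal.add_ne_top, ENNReal.natCast_ne_top]
    show (if E w₀ = 0 ∧ Ei n E w₀ = 0 then 1 else E w₀ / Ei n E w₀) = (n : ℝ≥0∞) + 1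
    rw [hEw, hEi, if_neg (by simp [ha0])]
    rw [div_eq_mul_inv, ENNReal.inv_div (Or.inl hn1t) (Or.inl (by simp)),
      ENNReal.mul_div_cancel ha0 hat]
  -- the witnessing measure
  refine ⟨E, hrand, htinv, Measure.dirac ((), 1), inferInstance, ?_⟩
  rw [aux_pi_dirac, lintegral_dirac]
  have hwl : withLabel n (fun _ : Fin (n+1) => (((), 1) : Unit × ℤˣ))
      (-((fun _ : Fin (n+1) => (((), 1) : Unit × ℤˣ)) (Fin.last n)).2) = w₀ := by
    funext i
    refine Fin.lastCases ?_ (fun j => ?_) i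
    · rw [show (withLabel n (fun _ : Fin (n+1) => (((), 1) : Unit × ℤˣ)) _) (Fin.last n)
          = _ from Fin.snoc_last _ _, hwlast]
    · rw [show (withLabel n (fun _ : Fin (n+1) => (((), 1) : Unit × ℤˣ)) _) (Fin.castSucc j)
          = _ from Fin.snoc_castSucc _ _ _, hwcs]
  rw [hwl, hEw, hEX]
  -- final arithmetic
  rw [ha, ← mul_div_assoc, ← ENNReal.ofReal_mul hc0.le]
  rw [ENNReal.lt_div_iff_mul_lt (Or.inl (by simp)) (Or.inl (by
    simp [ENNReal.add_ne_top, ENNReal.natCast_ne_top])), one_mul]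
  have hcast : ((n : ℝ≥0∞) + 1) = ENNReal.ofReal ((n : ℝ) + 1) := by
    rw [ENNReal.ofReal_add (by positivity) zero_le_one, ENNReal.ofReal_one,
      ENNReal.ofReal_natCast]
  rw [hcast]
  exact (ENNReal.ofReal_lt_ofReal_iff (mul_pos hc0 (mul_pos hnpos he))).mpr hkey

end
end

section
/- Let n ≥ 1, let Z = X × Y with X a nonempty measurable space and Y a measurable space, let B : Z ↪ Y be a Markov kernel, and let E : Z^{n+1} → [0,∞] be an exchangeability e-variable. Then G(z_1,…,z_n,z_{n+1}) := ∫_Y [E(z_1,…,z_n,x_{n+1},y) / E^t(z_1,…,z_n,x_{n+1},y)] B(dy | z_{n+1}) (with 0/0 := 0 and z_{n+1} = (x_{n+1},y_{n+1})) is a test-conditional exchangeability e-variable: for every (z_1,…,z_{n+1}) ∈ Z^{n+1}, (1/n!) Σ_σ G(z_{σ(1)},…,z_{σ(n)},z_{n+1}) ≤ 1, the sum over all permutations σ of {1,…,n}. -/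
open MeasureTheory ProbabilityTheory
open scoped ENNReal NNReal

noncomputable section

lemma rearr_measurable {Z : Type*} [MeasurableSpace Z] (n : ℕ) (σ : Equiv.Perm (Fin n)) :
    Measurable (fun w : Fin (n+1) → Z =>
      Fin.snoc (fun i => w (Fin.castSucc (σ i))) (w (Fin.last n)) : _ → Fin (n+1) → Z) := by
  rw [measurable_pi_iff]
  intro i
  induction i using Fin.lastCases with
  | last => simpa using measurable_pi_apply _
  | cast i => simpa using measurable_pi_apply _

lemma Et_measurable {Z : Type*} [MeasurableSpace Z] (n : ℕ) {E : (Fin (n+1) → Z) → ℝ≥0∞}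
    (hE : Measurable E) : Measurable (Et n E) := by
  apply Measurable.div _ measurable_const
  exact Finset.measurable_sum _ fun σ _ => hE.comp (rearr_measurable n σ)

lemma withLabel_measurable {X Y : Type*} [MeasurableSpace X] [MeasurableSpace Y]
    (n : ℕ) (z : Fin (n+1) → X × Y) : Measurable (withLabel n z) := by
  rw [measurable_pi_iff]
  intro i
  induction i using Fin.lastCases with
  | last =>
      simp only [withLabel, Fin.snoc_last]
      exact measurable_const.prodMk measurable_id
  | cast i =>
      simp only [withLabel, Fin.snoc_castSucc]
      exact measurable_const

lemma withLabel_rearr {X Y : Type*} (n : ℕ) (z : Fin (n+1) → X × Y)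
    (σ : Equiv.Perm (Fin n)) (y : Y) :
    withLabel n (Fin.snoc (fun i => z (Fin.castSucc (σ i))) (z (Fin.last n))) y
      = Fin.snoc (fun i => withLabel n z y (Fin.castSucc (σ i)))
          (withLabel n z y (Fin.last n)) := by
  funext j
  induction j using Fin.lastCases with
  | last => simp [withLabel]
  | cast j => simp [withLabel]

lemma Et_trainInv {Z : Type*} (n : ℕ) (E : (Fin (n+1) → Z) → ℝ≥0∞)
    (w : Fin (n+1) → Z) (σ : Equiv.Perm (Fin n)) :
    Et n E (Fin.snoc (fun i => w (Fin.castSucc (σ i))) (w (Fin.last n))) = Et n E w := by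
  simp only [Et]
  congr 1
  rw [← Equiv.sum_comp (Equiv.mulLeft σ)
    (fun τ : Equiv.Perm (Fin n) =>
      E (Fin.snoc (fun i => w (Fin.castSucc (τ i))) (w (Fin.last n))))]
  apply Finset.sum_congr rfl
  intro τ _
  congr 1
  funext j
  induction j using Fin.lastCases with
  | last => simp
  | cast j => simp [Equiv.Perm.mul_apply]


/-- Theorem: for an exchangeability e-variable `E`, the function
`G(z_1,…,z_n,z_{n+1}) := ∫ (E(z_1,…,z_n,x_{n+1},y) / E^t(z_1,…,z_n,x_{n+1},y)) B(dy|z_{n+1})`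
(with `0/0 := 0`) is a test-conditional exchangeability e-variable:
`(1/n!) Σ_σ G(z_{σ(1)},…,z_{σ(n)},z_{n+1}) ≤ 1` for every data sequence, i.e. `E^t` applied to
`G` is bounded by 1 pointwise. -/
theorem stmt6 {X Y : Type*} [MeasurableSpace X] [Nonempty X] [MeasurableSpace Y]
    (n : ℕ) (hn : 1 ≤ n) (B : Kernel (X × Y) Y) [IsMarkovKernel B]
    (E : (Fin (n+1) → X × Y) → ℝ≥0∞) (hE : IsExchE n E) :
    ∀ z : Fin (n+1) → X × Y,
      Et n (fun w => ∫⁻ y, E (withLabel n w y) / Et n E (withLabel n w y)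
          ∂(B (w (Fin.last n)))) z ≤ 1 := by
  intro z
  set G : (Fin (n+1) → X × Y) → ℝ≥0∞ := fun w =>
    ∫⁻ y, E (withLabel n w y) / Et n E (withLabel n w y) ∂(B (w (Fin.last n))) with hG
  have hfact : (Nat.factorial n : ℝ≥0∞) ≠ 0 := by
    exact Nat.cast_ne_zero.mpr (Nat.factorial_ne_zero n)
  have hfactT : (Nat.factorial n : ℝ≥0∞) ≠ ⊤ := ENNReal.natCast_ne_top _
  have key : ∀ σ : Equiv.Perm (Fin n),
      G (Fin.snoc (fun i => z (Fin.castSucc (σ i))) (z (Fin.last n)))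
        = ∫⁻ y, E (Fin.snoc (fun i => withLabel n z y (Fin.castSucc (σ i)))
              (withLabel n z y (Fin.last n))) / Et n E (withLabel n z y)
            ∂(B (z (Fin.last n))) := by
    intro σ
    simp only [hG, Fin.snoc_last]
    apply lintegral_congr
    intro y
    rw [withLabel_rearr, Et_trainInv]
  have hsum : (∑ σ : Equiv.Perm (Fin n),
      G (Fin.snoc (fun i => z (Fin.castSucc (σ i))) (z (Fin.last n))))
      ≤ (Nat.factorial n : ℝ≥0∞) := by
    calc (∑ σ : Equiv.Perm (Fin n),
          G (Fin.snoc (fun i => z (Fin.castSucc (σ i))) (z (Fin.last n))))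
        = ∫⁻ y, ∑ σ : Equiv.Perm (Fin n),
            E (Fin.snoc (fun i => withLabel n z y (Fin.castSucc (σ i)))
              (withLabel n z y (Fin.last n))) / Et n E (withLabel n z y)
            ∂(B (z (Fin.last n))) := by
          simp only [key]
          rw [lintegral_finset_sum]
          intro σ _
          exact ((hE.1.comp
            ((rearr_measurable n σ).comp (withLabel_measurable n z))).div
            ((Et_measurable n hE.1).comp (withLabel_measurable n z)))
      _ ≤ ∫⁻ _, (Nat.factorial n : ℝ≥0∞) ∂(B (z (Fin.last n))) := by
          apply lintegral_mono
          intro y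
          dsimp only
          set w := withLabel n z y with hw
          set S := ∑ σ : Equiv.Perm (Fin n),
            E (Fin.snoc (fun i => w (Fin.castSucc (σ i))) (w (Fin.last n))) with hS
          have hEt : Et n E w = S / (Nat.factorial n : ℝ≥0∞) := rfl
          have hdiv : (∑ σ : Equiv.Perm (Fin n),
              E (Fin.snoc (fun i => w (Fin.castSucc (σ i))) (w (Fin.last n)))
                / Et n E w) = S / (S / (Nat.factorial n : ℝ≥0∞)) := by
            rw [hEt]
            simp only [div_eq_mul_inv, ← Finset.sum_mul, hS]
          rw [hdiv]
          rcases eq_or_ne S 0 with h0 | h0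
          · simp [h0]
          rcases eq_or_ne S ⊤ with ht | ht
          · simp [ht, ENNReal.top_div_of_ne_top hfactT]
          · have hD0 : S / (Nat.factorial n : ℝ≥0∞) ≠ 0 := by
              simp [ENNReal.div_eq_zero_iff, h0, hfactT]
            have hDt : S / (Nat.factorial n : ℝ≥0∞) ≠ ⊤ := by
              simp [ENNReal.div_eq_top, ht, hfact]
            rw [ENNReal.div_le_iff hD0 hDt, mul_comm, ENNReal.div_mul_cancel hfact hfactT]
      _ = (Nat.factorial n : ℝ≥0∞) := by
          simp
  calc Et n G z
      = (∑ σ : Equiv.Perm (Fin n),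
          G (Fin.snoc (fun i => z (Fin.castSucc (σ i))) (z (Fin.last n))))
        / (Nat.factorial n : ℝ≥0∞) := rfl
    _ ≤ (Nat.factorial n : ℝ≥0∞) / (Nat.factorial n : ℝ≥0∞) :=
        ENNReal.div_le_div_right hsum _
    _ = 1 := ENNReal.div_self hfact hfactT

end
end

section
/- Let n ≥ 1, let Z = X × Y with X a nonempty measurable space and Y a measurable space, let B : Z ↪ Y be a Markov kernel, and let E : Z^{n+1} → [0,∞] be a randomness e-variable. Then G(z_1,…,z_n,z_{n+1}) := e^{-1/2} ∫_Y sqrt( E(z_1,…,z_n,x_{n+1},y) / E^{tX}(z_1,…,z_n,x_{n+1},y) ) B(dy | z_{n+1}) (with 0/0 := 0 and z_{n+1} = (x_{n+1},y_{n+1})) is a randomness e-variable. -/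
open MeasureTheory ProbabilityTheory
open scoped ENNReal NNReal

noncomputable section

namespace S7
variable {Z : Type*} [MeasurableSpace Z]

lemma measurable_permMap {n : ℕ} (π : Equiv.Perm (Fin n)) :
    Measurable (fun w : Fin n → Z => fun i => w (π i)) :=
  measurable_pi_lambda _ fun i => measurable_pi_apply _

lemma pi_map_perm {n : ℕ} (μ : Fin n → Measure Z) [∀ i, SigmaFinite (μ i)]
    (π : Equiv.Perm (Fin n)) :
    Measure.map (fun w : Fin n → Z => fun i => w (π i)) (Measure.pi μ)
      = Measure.pi (fun i => μ (π i)) := by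
  refine (Measure.pi_eq fun s hs => ?_).symm
  rw [Measure.map_apply (measurable_permMap π) (MeasurableSet.univ_pi hs)]
  have hpre : (fun w : Fin n → Z => fun i => w (π i)) ⁻¹' (Set.pi Set.univ s)
      = Set.pi Set.univ (fun j => s (π.symm j)) := by
    ext w
    simp only [Set.mem_preimage, Set.mem_univ_pi]
    constructor
    · intro h j; simpa [Equiv.apply_symm_apply] using h (π.symm j)
    · intro h i; simpa using h (π i)
  rw [hpre, Measure.pi_pi]
  exact (Equiv.prod_comp π (fun j => μ j (s (π.symm j)))).symm.trans
    (by apply Finset.prod_congr rfl; intro i _; simp)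

lemma lintegral_pi_perm {n : ℕ} (μ : Fin n → Measure Z) [∀ i, SigmaFinite (μ i)]
    (π : Equiv.Perm (Fin n)) {f : (Fin n → Z) → ℝ≥0∞} (hf : Measurable f) :
    ∫⁻ w, f (fun i => w (π i)) ∂(Measure.pi μ)
      = ∫⁻ w, f w ∂(Measure.pi (fun i => μ (π i))) := by
  rw [← pi_map_perm μ π, lintegral_map hf (measurable_permMap π)]

lemma isFiniteMeasure_smul {c : ℝ≥0∞} (hc : c ≠ ∞) (μ : Measure Z) [IsFiniteMeasure μ] :
    IsFiniteMeasure (c • μ) :=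
  ⟨by simp only [Measure.smul_apply, smul_eq_mul]; exact ENNReal.mul_lt_top hc.lt_top (measure_lt_top μ _)⟩

lemma pi_sum {n : ℕ} {κ : Type*} [Fintype κ] [DecidableEq κ] (m : Fin n → κ → Measure Z)
    [∀ i k, IsFiniteMeasure (m i k)] :
    Measure.pi (fun i => ∑ k, m i k) = ∑ g : Fin n → κ, Measure.pi (fun i => m i (g i)) := by
  haveI : ∀ i, IsFiniteMeasure (∑ k, m i k) := by
    intro i
    refine ⟨?_⟩
    rw [Measure.finset_sum_apply]
    exact ENNReal.sum_lt_top.2 fun k _ => measure_lt_top _ _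
  refine Measure.pi_eq fun s hs => ?_
  rw [Measure.finset_sum_apply]
  have h1 : ∀ g : Fin n → κ, Measure.pi (fun i => m i (g i)) (Set.pi Set.univ s)
      = ∏ i, m i (g i) (s i) := fun g => by
    haveI : ∀ i, SigmaFinite (m i (g i)) := fun i => @IsFiniteMeasure.toSigmaFinite _ _ (m i (g i)) (‹∀ i k, IsFiniteMeasure (m i k)› i (g i))
    exact Measure.pi_pi _ _
  simp_rw [h1]
  have h2 : ∀ i, (∑ k, m i k) (s i) = ∑ k, m i k (s i) := fun i => Measure.finset_sum_apply _ _ _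
  simp_rw [h2]
  rw [Fintype.prod_sum]

lemma pi_smul {n : ℕ} (c : Fin n → ℝ≥0∞) (hc : ∀ i, c i ≠ ∞) (μ : Fin n → Measure Z)
    [∀ i, IsFiniteMeasure (μ i)] :
    Measure.pi (fun i => c i • μ i) = (∏ i, c i) • Measure.pi μ := by
  haveI : ∀ i, IsFiniteMeasure (c i • μ i) := fun i => isFiniteMeasure_smul (hc i) (μ i)
  haveI : ∀ i, SigmaFinite (μ i) := fun i => @IsFiniteMeasure.toSigmaFinite _ _ (μ i) (‹∀ i, IsFiniteMeasure (μ i)› i)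
  refine Measure.pi_eq fun s hs => ?_
  simp only [Measure.smul_apply, smul_eq_mul, Measure.pi_pi]
  rw [Finset.prod_mul_distrib]

lemma pi_dirac {n : ℕ} (w : Fin n → Z) :
    Measure.pi (fun i => Measure.dirac (w i)) = Measure.dirac w := by
  classical
  refine Measure.pi_eq fun s hs => ?_
  rw [Measure.dirac_apply' _ (MeasurableSet.univ_pi hs)]
  have h1 : ∀ i, Measure.dirac (w i) (s i) = if w i ∈ s i then 1 else 0 := by
    intro i
    rw [Measure.dirac_apply' _ (hs i)]
    simp [Set.indicator_apply]
  simp_rw [h1, Finset.prod_boole]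
  simp [Set.indicator_apply, Set.mem_pi]

end S7

namespace S7
open Equiv

variable {Z : Type*} [MeasurableSpace Z] {n : ℕ}

/-- action of a training permutation -/
def act (σ : Equiv.Perm (Fin n)) (w : Fin (n+1) → Z) : Fin (n+1) → Z :=
  Fin.snoc (fun i => w (Fin.castSucc (σ i))) (w (Fin.last n))

lemma act_castSucc (σ : Equiv.Perm (Fin n)) (w : Fin (n+1) → Z) (j : Fin n) :
    act σ w (Fin.castSucc j) = w (Fin.castSucc (σ j)) := by
  simp [act, Fin.snoc_castSucc]

lemma act_last (σ : Equiv.Perm (Fin n)) (w : Fin (n+1) → Z) :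
    act σ w (Fin.last n) = w (Fin.last n) := by
  simp [act, Fin.snoc_last]

lemma act_one (w : Fin (n+1) → Z) : act (1 : Equiv.Perm (Fin n)) w = w := by
  funext i
  induction i using Fin.lastCases with
  | last => simp [act_last]
  | cast j => simp [act_castSucc]

lemma act_act (σ τ : Equiv.Perm (Fin n)) (w : Fin (n+1) → Z) :
    act σ (act τ w) = act (τ * σ) w := by
  funext i
  induction i using Fin.lastCases with
  | last => simp [act_last]
  | cast j => simp [act_castSucc, Equiv.Perm.mul_apply]

/-- the corresponding permutation of `Fin (n+1)` fixing the last element -/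
def permFin (σ : Equiv.Perm (Fin n)) : Equiv.Perm (Fin (n+1)) :=
  finSuccEquivLast.trans ((Equiv.optionCongr σ).trans finSuccEquivLast.symm)

lemma permFin_castSucc (σ : Equiv.Perm (Fin n)) (j : Fin n) :
    permFin σ (Fin.castSucc j) = Fin.castSucc (σ j) := by
  simp [permFin]

lemma permFin_last (σ : Equiv.Perm (Fin n)) : permFin σ (Fin.last n) = Fin.last n := by
  simp [permFin]

lemma permFin_eq_last_iff (σ : Equiv.Perm (Fin n)) (i : Fin (n+1)) :
    permFin σ i = Fin.last n ↔ i = Fin.last n := by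
  constructor
  · intro h
    have h2 : permFin σ i = permFin σ (Fin.last n) := by rw [h, permFin_last]
    exact (permFin σ).injective h2
  · intro h; rw [h, permFin_last]

lemma act_eq_permMap (σ : Equiv.Perm (Fin n)) (w : Fin (n+1) → Z) :
    act σ w = fun i => w (permFin σ i) := by
  funext i
  induction i using Fin.lastCases with
  | last => simp [act_last, permFin_last]
  | cast j => simp [act_castSucc, permFin_castSucc]

lemma Et_def' (E : (Fin (n+1) → Z) → ℝ≥0∞) (w : Fin (n+1) → Z) :
    Et n E w = (∑ σ : Equiv.Perm (Fin n), E (act σ w)) / (Nat.factorial n : ℝ≥0∞) := rfl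

lemma factorial_ne_zero' (m : ℕ) : ((Nat.factorial m : ℕ) : ℝ≥0∞) ≠ 0 :=
  Nat.cast_ne_zero.2 (Nat.factorial_ne_zero m)

lemma factorial_ne_top' (m : ℕ) : ((Nat.factorial m : ℕ) : ℝ≥0∞) ≠ ∞ :=
  ENNReal.natCast_ne_top _

lemma sum_act (E : (Fin (n+1) → Z) → ℝ≥0∞) (w : Fin (n+1) → Z) :
    ∑ σ : Equiv.Perm (Fin n), E (act σ w) = Et n E w * (Nat.factorial n : ℝ≥0∞) := by
  rw [Et_def', ENNReal.div_mul_cancel (factorial_ne_zero' n) (factorial_ne_top' n)]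

lemma Et_act (E : (Fin (n+1) → Z) → ℝ≥0∞) (σ : Equiv.Perm (Fin n)) (w : Fin (n+1) → Z) :
    Et n E (act σ w) = Et n E w := by
  rw [Et_def', Et_def']
  congr 1
  rw [Fintype.sum_equiv (Equiv.mulLeft σ) _ (fun τ => E (act τ w))]
  intro τ
  simp [act_act, Equiv.coe_mulLeft]

lemma E_le_sum_act (E : (Fin (n+1) → Z) → ℝ≥0∞) (w : Fin (n+1) → Z) :
    E w ≤ ∑ σ : Equiv.Perm (Fin n), E (act σ w) := by
  have := Finset.single_le_sum (f := fun σ : Equiv.Perm (Fin n) => E (act σ w))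
    (fun _ _ => zero_le) (Finset.mem_univ 1)
  simpa [act_one] using this

lemma E_eq_zero_of_Et (E : (Fin (n+1) → Z) → ℝ≥0∞) (w : Fin (n+1) → Z)
    (h : Et n E w = 0) : E w = 0 := by
  have h2 : ∑ σ : Equiv.Perm (Fin n), E (act σ w) = 0 := by
    rw [sum_act, h, zero_mul]
  exact le_antisymm (h2 ▸ E_le_sum_act E w) (zero_le)

lemma Et_le_bound {E : (Fin (n+1) → Z) → ℝ≥0∞} {C : ℝ≥0∞} (hE : ∀ w, E w ≤ C)
    (w : Fin (n+1) → Z) : Et n E w ≤ C := by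
  rw [Et_def']
  refine ENNReal.div_le_of_le_mul ?_
  calc ∑ σ : Equiv.Perm (Fin n), E (act σ w) ≤ ∑ _σ : Equiv.Perm (Fin n), C :=
        Finset.sum_le_sum fun σ _ => hE _
    _ = C * (Nat.factorial n : ℝ≥0∞) := by
        rw [Finset.sum_const, Finset.card_univ, Fintype.card_perm, Fintype.card_fin,
          nsmul_eq_mul, mul_comm]

lemma Ei_comp_perm (F : (Fin (n+1) → Z) → ℝ≥0∞) (π : Equiv.Perm (Fin (n+1)))
    (w : Fin (n+1) → Z) : Ei n F (fun i => w (π i)) = Ei n F w := by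
  unfold Ei
  congr 1
  rw [Fintype.sum_equiv (Equiv.mulLeft π) _ (fun τ => F (fun i => w (τ i)))]
  intro ρ
  simp [Equiv.coe_mulLeft, Equiv.Perm.mul_apply]

lemma Ei_le_bound {F : (Fin (n+1) → Z) → ℝ≥0∞} {C : ℝ≥0∞} (hF : ∀ w, F w ≤ C)
    (w : Fin (n+1) → Z) : Ei n F w ≤ C := by
  unfold Ei
  refine ENNReal.div_le_of_le_mul ?_
  calc ∑ π : Equiv.Perm (Fin (n+1)), F (fun i => w (π i))
      ≤ ∑ _π : Equiv.Perm (Fin (n+1)), C := Finset.sum_le_sum fun π _ => hF _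
    _ = C * (Nat.factorial (n+1) : ℝ≥0∞) := by
        rw [Finset.sum_const, Finset.card_univ, Fintype.card_perm, Fintype.card_fin,
          nsmul_eq_mul, mul_comm]

lemma measurable_act (σ : Equiv.Perm (Fin n)) : Measurable (fun w : Fin (n+1) → Z => act σ w) := by
  have : (fun w : Fin (n+1) → Z => act σ w) = fun w => fun i => w (permFin σ i) := by
    funext w; exact act_eq_permMap σ w
  rw [this]
  exact measurable_permMap _

lemma measurable_Et {E : (Fin (n+1) → Z) → ℝ≥0∞} (hE : Measurable E) :
    Measurable (Et n E) := by
  have : Et n E = fun w => (∑ σ : Equiv.Perm (Fin n), E (act σ w)) / (Nat.factorial n : ℝ≥0∞) :=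
    rfl
  rw [this]
  exact (Finset.measurable_sum _ fun σ _ => hE.comp (measurable_act σ)).div measurable_const

lemma measurable_Ei {F : (Fin (n+1) → Z) → ℝ≥0∞} (hF : Measurable F) :
    Measurable (Ei n F) := by
  unfold Ei
  exact (Finset.measurable_sum _ fun π _ => hF.comp (measurable_permMap π)).div measurable_const

lemma measurable_EX {F : (Fin (n+1) → Z) → ℝ≥0∞} (hF : Measurable F) :
    Measurable (EX n F) := by
  unfold EX
  exact Measurable.ite ((hF (measurableSet_singleton 0)).inter
    ((measurable_Ei hF) (measurableSet_singleton 0))) measurable_const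
    (hF.div (measurable_Ei hF))

/-- globally bounded -/
lemma isRandE_bound {E : (Fin (n+1) → Z) → ℝ≥0∞} (hE : IsRandE n E) (w : Fin (n+1) → Z) :
    E w ≤ ((n+1 : ℕ) : ℝ≥0∞) ^ (n+1) := by
  classical
  have hNz : (((n+1 : ℕ)) : ℝ≥0∞) ≠ 0 := by simp
  have hNt : (((n+1 : ℕ)) : ℝ≥0∞) ≠ ∞ := ENNReal.natCast_ne_top _
  set Q : Measure Z := (((n+1 : ℕ) : ℝ≥0∞))⁻¹ • ∑ i : Fin (n+1), Measure.dirac (w i) with hQ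
  haveI : IsProbabilityMeasure Q := by
    constructor
    rw [hQ]
    simp only [Measure.smul_apply, Measure.finset_sum_apply, smul_eq_mul]
    have h0 : ∀ i : Fin (n+1), Measure.dirac (w i) Set.univ = 1 := fun i => by simp
    simp_rw [h0]
    simp only [Finset.sum_const, Finset.card_univ, Fintype.card_fin, nsmul_eq_mul, mul_one]
    exact ENNReal.inv_mul_cancel hNz hNt
  have hb := hE.2 Q inferInstance
  have hexp : Q = ∑ k : Fin (n+1), (((n+1 : ℕ) : ℝ≥0∞))⁻¹ • Measure.dirac (w k) := by
    rw [hQ, Finset.smul_sum]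
  have hpi : (Measure.pi fun _ : Fin (n+1) => Q)
      = ∑ g : Fin (n+1) → Fin (n+1),
          Measure.pi (fun j => (((n+1 : ℕ) : ℝ≥0∞))⁻¹ • Measure.dirac (w (g j))) := by
    rw [hexp]
    exact @pi_sum Z _ (n+1) (Fin (n+1)) _ _
      (fun j k => (((n+1 : ℕ) : ℝ≥0∞))⁻¹ • Measure.dirac (w k))
      (fun j k => isFiniteMeasure_smul (by simp) _)
  have hterm : Measure.pi (fun j : Fin (n+1) => (((n+1 : ℕ) : ℝ≥0∞))⁻¹ • Measure.dirac (w j))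
      = ((((n+1 : ℕ) : ℝ≥0∞))⁻¹ ^ (n+1)) • Measure.dirac w := by
    rw [@pi_smul Z _ (n+1) (fun _ => (((n+1 : ℕ) : ℝ≥0∞))⁻¹) (fun _ => by simp)
      (fun j => Measure.dirac (w j)) (fun j => by infer_instance)]
    rw [pi_dirac]
    simp
  have hge : ((((n+1 : ℕ) : ℝ≥0∞))⁻¹ ^ (n+1)) * E w
      ≤ ∫⁻ z, E z ∂(Measure.pi fun _ : Fin (n+1) => Q) := by
    rw [hpi, lintegral_finset_sum_measure]
    have h1 : ((((n+1 : ℕ) : ℝ≥0∞))⁻¹ ^ (n+1)) * E w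
        = ∫⁻ z, E z ∂(Measure.pi (fun j : Fin (n+1) =>
            (((n+1 : ℕ) : ℝ≥0∞))⁻¹ • Measure.dirac (w j))) := by
      rw [hterm, lintegral_smul_measure, lintegral_dirac' _ hE.1, smul_eq_mul]
    rw [h1]
    exact Finset.single_le_sum
      (f := fun g : Fin (n+1) → Fin (n+1) =>
        ∫⁻ z, E z ∂(Measure.pi (fun j => (((n+1 : ℕ) : ℝ≥0∞))⁻¹ • Measure.dirac (w (g j)))))
      (fun _ _ => zero_le) (Finset.mem_univ (fun j : Fin (n+1) => j))
  have h2 : ((((n+1 : ℕ) : ℝ≥0∞))⁻¹ ^ (n+1)) * E w ≤ 1 := hge.trans hb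
  have h3 : ((n+1 : ℕ) : ℝ≥0∞) ^ (n+1) * ((((n+1 : ℕ) : ℝ≥0∞))⁻¹ ^ (n+1)) = 1 := by
    rw [← mul_pow, ENNReal.mul_inv_cancel hNz hNt, one_pow]
  calc E w = ((n+1 : ℕ) : ℝ≥0∞) ^ (n+1) * ((((n+1 : ℕ) : ℝ≥0∞))⁻¹ ^ (n+1)) * E w := by
        rw [h3, one_mul]
    _ = ((n+1 : ℕ) : ℝ≥0∞) ^ (n+1) * (((((n+1 : ℕ) : ℝ≥0∞))⁻¹ ^ (n+1)) * E w) := by ring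
    _ ≤ ((n+1 : ℕ) : ℝ≥0∞) ^ (n+1) * 1 := mul_le_mul_right h2 _
    _ = ((n+1 : ℕ) : ℝ≥0∞) ^ (n+1) := mul_one _

end S7


namespace S7
open Equiv

variable {Z : Type*} [MeasurableSpace Z] {n : ℕ}

lemma div_EX_le {a b c : ℝ≥0∞} (hab : b = 0 → a = 0) (hb : b ≠ ∞) (hc : c ≠ ∞) :
    a / (if b = 0 ∧ c = 0 then 1 else b / c) ≤ a / b * c := by
  rcases eq_or_ne b 0 with hb0 | hb0
  · simp [hab hb0]
  rcases eq_or_ne c 0 with hc0 | hc0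
  · rw [if_neg (by tauto), hc0, ENNReal.div_zero hb0]
    simp
  · rw [if_neg (by tauto)]
    have h1 : (b / c)⁻¹ = c / b := ENNReal.inv_div (Or.inr hb) (Or.inr hb0)
    rw [div_eq_mul_inv, h1, div_eq_mul_inv, div_eq_mul_inv]
    exact le_of_eq (by ring)

lemma key_pointwise {E : (Fin (n+1) → Z) → ℝ≥0∞} {C : ℝ≥0∞} (hC : C ≠ ∞)
    (hEb : ∀ w, E w ≤ C) (w : Fin (n+1) → Z) :
    E w / EX n (Et n E) w ≤ E w / Et n E w * Ei n (Et n E) w := by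
  have hTb : ∀ v, Et n E v ≤ C := Et_le_bound hEb
  have h1 : Et n E w ≠ ∞ := fun h => hC (top_le_iff.1 (h ▸ hTb w))
  have h2 : Ei n (Et n E) w ≠ ∞ := fun h => hC (top_le_iff.1 (h ▸ Ei_le_bound hTb w))
  exact div_EX_le (fun h => E_eq_zero_of_Et E w h) h1 h2

lemma lintegral_act_pi (μ : Fin (n+1) → Measure Z) [∀ i, SigmaFinite (μ i)]
    (hμ : ∀ σ : Equiv.Perm (Fin n), (fun i => μ (permFin σ i)) = μ)
    {f : (Fin (n+1) → Z) → ℝ≥0∞} (hf : Measurable f) (σ : Equiv.Perm (Fin n)) :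
    ∫⁻ w, f (act σ w) ∂(Measure.pi μ) = ∫⁻ w, f w ∂(Measure.pi μ) := by
  have h1 : (fun w : Fin (n+1) → Z => f (act σ w)) = fun w => f (fun i => w (permFin σ i)) := by
    funext w; rw [act_eq_permMap]
  rw [h1, lintegral_pi_perm μ (permFin σ) hf, hμ σ]

lemma lintegral_perm_pi (μ : Fin (n+1) → Measure Z) [∀ i, SigmaFinite (μ i)]
    (π : Equiv.Perm (Fin (n+1))) (hμ : (fun i => μ (π i)) = μ)
    {f : (Fin (n+1) → Z) → ℝ≥0∞} (hf : Measurable f) :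
    ∫⁻ w, f (fun i => w (π i)) ∂(Measure.pi μ) = ∫⁻ w, f w ∂(Measure.pi μ) := by
  rw [lintegral_pi_perm μ π hf, hμ]

lemma lintegral_Et_pi (μ : Measure Z) [SigmaFinite μ] {E : (Fin (n+1) → Z) → ℝ≥0∞}
    (hE : Measurable E) :
    ∫⁻ w, Et n E w ∂(Measure.pi fun _ : Fin (n+1) => μ)
      = ∫⁻ w, E w ∂(Measure.pi fun _ : Fin (n+1) => μ) := by
  have h0 : Et n E = fun w => (∑ σ : Equiv.Perm (Fin n), E (act σ w))
      * ((Nat.factorial n : ℝ≥0∞))⁻¹ := by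
    funext w; rw [Et_def', div_eq_mul_inv]
  rw [h0, lintegral_mul_const' _ _
    (ENNReal.inv_ne_top.2 (factorial_ne_zero' n))]
  rw [lintegral_finset_sum _ (fun σ _ => (by exact hE.comp (measurable_act σ) :
    Measurable fun w : Fin (n+1) → Z => E (act σ w)))]
  have h1 : ∀ σ : Equiv.Perm (Fin n),
      ∫⁻ w, E (act σ w) ∂(Measure.pi fun _ : Fin (n+1) => μ)
        = ∫⁻ w, E w ∂(Measure.pi fun _ : Fin (n+1) => μ) :=
    fun σ => lintegral_act_pi _ (fun _ => rfl) hE σ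
  simp_rw [h1]
  rw [Finset.sum_const, Finset.card_univ, Fintype.card_perm, Fintype.card_fin, nsmul_eq_mul,
    mul_right_comm, ENNReal.mul_inv_cancel (factorial_ne_zero' n) (factorial_ne_top' n), one_mul]

lemma lintegral_Ei_pi (μ : Measure Z) [SigmaFinite μ] {F : (Fin (n+1) → Z) → ℝ≥0∞}
    (hF : Measurable F) :
    ∫⁻ w, Ei n F w ∂(Measure.pi fun _ : Fin (n+1) => μ)
      = ∫⁻ w, F w ∂(Measure.pi fun _ : Fin (n+1) => μ) := by
  have h0 : Ei n F = fun w => (∑ π : Equiv.Perm (Fin (n+1)), F (fun i => w (π i)))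
      * ((Nat.factorial (n+1) : ℝ≥0∞))⁻¹ := by
    funext w; rw [Ei, div_eq_mul_inv]
  rw [h0, lintegral_mul_const' _ _
    (ENNReal.inv_ne_top.2 (factorial_ne_zero' (n+1)))]
  rw [lintegral_finset_sum _ (fun π _ => (by exact hF.comp (measurable_permMap π) :
    Measurable fun w : Fin (n+1) → Z => F (fun i => w (π i))))]
  have h1 : ∀ π : Equiv.Perm (Fin (n+1)),
      ∫⁻ w, F (fun i => w (π i)) ∂(Measure.pi fun _ : Fin (n+1) => μ)
        = ∫⁻ w, F w ∂(Measure.pi fun _ : Fin (n+1) => μ) :=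
    fun π => lintegral_perm_pi _ π rfl hF
  simp_rw [h1]
  rw [Finset.sum_const, Finset.card_univ, Fintype.card_perm, Fintype.card_fin, nsmul_eq_mul,
    mul_right_comm, ENNReal.mul_inv_cancel (factorial_ne_zero' (n+1)) (factorial_ne_top' (n+1)),
    one_mul]

/-- the test family: `Q'` on the last coordinate, `Q` elsewhere. -/
def fam (Q Q' : Measure Z) (n : ℕ) : Fin (n+1) → Measure Z :=
  fun i => if i = Fin.last n then Q' else Q

lemma fam_perm (Q Q' : Measure Z) (σ : Equiv.Perm (Fin n)) :
    (fun i => fam Q Q' n (permFin σ i)) = fam Q Q' n := by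
  funext i
  simp only [fam, permFin_eq_last_iff]

instance fam_prob (Q Q' : Measure Z) [IsProbabilityMeasure Q] [IsProbabilityMeasure Q'] (i : Fin (n+1)) :
    IsProbabilityMeasure (fam Q Q' n i) := by
  unfold fam
  split <;> infer_instance

lemma stepC {E : (Fin (n+1) → Z) → ℝ≥0∞} (hE : Measurable E)
    (Q Q' : Measure Z) [IsProbabilityMeasure Q] [IsProbabilityMeasure Q'] :
    ∫⁻ w, E w / Et n E w ∂(Measure.pi (fam Q Q' n)) ≤ 1 := by
  set ν := Measure.pi (fam Q Q' n) with hν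
  haveI : IsProbabilityMeasure ν := by rw [hν]; infer_instance
  have hg : Measurable (fun w : Fin (n+1) → Z => E w / Et n E w) :=
    hE.div (measurable_Et hE)
  have h2 : ∀ σ : Equiv.Perm (Fin n),
      ∫⁻ w, E (act σ w) / Et n E (act σ w) ∂ν = ∫⁻ w, E w / Et n E w ∂ν := fun σ =>
    lintegral_act_pi (fam Q Q' n) (fam_perm Q Q') hg σ
  have h3 : (Nat.factorial n : ℝ≥0∞) * ∫⁻ w, E w / Et n E w ∂ν
      = ∑ σ : Equiv.Perm (Fin n), ∫⁻ w, E (act σ w) / Et n E (act σ w) ∂ν := by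
    simp_rw [h2]
    rw [Finset.sum_const, Finset.card_univ, Fintype.card_perm, Fintype.card_fin, nsmul_eq_mul]
  have h4 : ∑ σ : Equiv.Perm (Fin n), ∫⁻ w, E (act σ w) / Et n E (act σ w) ∂ν
      = ∫⁻ w, ∑ σ : Equiv.Perm (Fin n), E (act σ w) / Et n E (act σ w) ∂ν :=
    (lintegral_finset_sum _ (fun σ _ =>
      (hE.comp (measurable_act σ)).div ((measurable_Et hE).comp (measurable_act σ)))).symm
  have h5 : ∀ w, ∑ σ : Equiv.Perm (Fin n), E (act σ w) / Et n E (act σ w)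
      ≤ (Nat.factorial n : ℝ≥0∞) := by
    intro w
    calc ∑ σ : Equiv.Perm (Fin n), E (act σ w) / Et n E (act σ w)
        = ∑ σ : Equiv.Perm (Fin n), E (act σ w) * (Et n E w)⁻¹ := by
          refine Finset.sum_congr rfl fun σ _ => ?_
          rw [Et_act, div_eq_mul_inv]
      _ = (∑ σ : Equiv.Perm (Fin n), E (act σ w)) * (Et n E w)⁻¹ := by
          rw [Finset.sum_mul]
      _ = Et n E w * (Nat.factorial n : ℝ≥0∞) * (Et n E w)⁻¹ := by rw [sum_act]
      _ = (Nat.factorial n : ℝ≥0∞) * (Et n E w / Et n E w) := by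
          rw [div_eq_mul_inv]; ring
      _ ≤ (Nat.factorial n : ℝ≥0∞) * 1 := mul_le_mul_right ENNReal.div_self_le_one _
      _ = (Nat.factorial n : ℝ≥0∞) := mul_one _
  have h6 : (Nat.factorial n : ℝ≥0∞) * ∫⁻ w, E w / Et n E w ∂ν
      ≤ (Nat.factorial n : ℝ≥0∞) * 1 := by
    rw [h3, h4, mul_one]
    calc ∫⁻ w, ∑ σ : Equiv.Perm (Fin n), E (act σ w) / Et n E (act σ w) ∂ν
        ≤ ∫⁻ _w, (Nat.factorial n : ℝ≥0∞) ∂ν := lintegral_mono h5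
      _ = (Nat.factorial n : ℝ≥0∞) := by rw [lintegral_const, measure_univ, mul_one]
  exact (ENNReal.mul_le_mul_iff_right (factorial_ne_zero' n) (factorial_ne_top' n)).1 h6

lemma real_ineq (n : ℕ) (hn : 1 ≤ n) : (((n : ℝ) + 1) / n) ^ n ≤ Real.exp 1 := by
  have hn0 : (0:ℝ) < n := by exact_mod_cast Nat.pos_of_ne_zero (by omega)
  have hx : (0:ℝ) < ((n : ℝ) + 1) / n := by positivity
  have hlog : Real.log (((n : ℝ) + 1) / n) ≤ 1 / n := by
    have h1 := Real.log_le_sub_one_of_pos hx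
    have h2 : ((n : ℝ) + 1) / n - 1 = 1 / n := by field_simp; ring
    linarith
  calc (((n : ℝ) + 1) / n) ^ n = Real.exp (Real.log (((n : ℝ) + 1) / n)) ^ n := by
        rw [Real.exp_log hx]
    _ = Real.exp ((n : ℝ) * Real.log (((n : ℝ) + 1) / n)) := by rw [← Real.exp_nat_mul]
    _ ≤ Real.exp 1 := by
        refine Real.exp_le_exp.2 ?_
        have h3 : (n : ℝ) * Real.log (((n : ℝ) + 1) / n) ≤ (n : ℝ) * (1 / n) :=
          mul_le_mul_of_nonneg_left hlog (by positivity)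
        rwa [mul_one_div, div_self hn0.ne'] at h3

lemma stepD {E : (Fin (n+1) → Z) → ℝ≥0∞} (hE : IsRandE n E) (hn : 1 ≤ n)
    (Q Q' : Measure Z) [IsProbabilityMeasure Q] [IsProbabilityMeasure Q'] :
    ∫⁻ w, Ei n (Et n E) w ∂(Measure.pi (fam Q Q' n))
      ≤ ENNReal.ofReal (Real.exp 1) := by
  classical
  have hnR0 : ((n : ℝ≥0∞)) ≠ 0 := Nat.cast_ne_zero.2 (by omega)
  have hc1 : ((n : ℝ≥0∞) + 1) ≠ 0 := by simp
  have hc2 : ((n : ℝ≥0∞) + 1) ≠ ∞ := by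
    exact ENNReal.add_ne_top.2 ⟨ENNReal.natCast_ne_top n, ENNReal.one_ne_top⟩
  set a : ℝ≥0∞ := (n : ℝ≥0∞) / ((n : ℝ≥0∞) + 1) with ha
  set b : ℝ≥0∞ := ((n : ℝ≥0∞) + 1)⁻¹ with hb
  have hat : a ≠ ∞ := by
    rw [ha]
    exact (ENNReal.div_lt_top (ENNReal.natCast_ne_top n) hc1).ne
  have hbt : b ≠ ∞ := by rw [hb]; exact ENNReal.inv_ne_top.2 hc1
  have ha0 : a ≠ 0 := by
    rw [ha, ne_eq, ENNReal.div_eq_zero_iff]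
    push_neg
    exact ⟨hnR0, hc2⟩
  set Qbar : Measure Z := b • Q' + a • Q with hQbar
  haveI : IsProbabilityMeasure Qbar := by
    constructor
    rw [hQbar]
    simp only [Measure.coe_add, Pi.add_apply, Measure.smul_apply, smul_eq_mul, measure_univ,
      mul_one]
    rw [hb, ha, ← one_div, ENNReal.div_add_div_same, add_comm, ENNReal.div_self hc1 hc2]
  -- the symmetrized integral under the iid mixture is at most 1
  have hbar : ∫⁻ w, Ei n (Et n E) w ∂(Measure.pi fun _ : Fin (n+1) => Qbar) ≤ 1 := by
    rw [lintegral_Ei_pi Qbar (measurable_Et hE.1), lintegral_Et_pi Qbar hE.1]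
    exact hE.2 Qbar inferInstance
  -- expand the product of the mixture
  have hexp : (Measure.pi fun _ : Fin (n+1) => Qbar)
      = ∑ g : Fin (n+1) → Bool,
          Measure.pi (fun i => if g i then b • Q' else a • Q) := by
    have h1 : (fun _ : Fin (n+1) => Qbar)
        = fun _ : Fin (n+1) => ∑ k : Bool, (if k then b • Q' else a • Q) := by
      funext i
      rw [Fintype.sum_bool]
      simp [hQbar]
    rw [h1]
    exact @pi_sum Z _ (n+1) Bool _ _ (fun _ k => if k then b • Q' else a • Q)
      (fun i k => by
        cases k
        · exact isFiniteMeasure_smul hat Q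
        · exact isFiniteMeasure_smul hbt Q')
  -- each "one Q' coordinate" term
  have hterm : ∀ k : Fin (n+1),
      Measure.pi (fun i => if (fun j => decide (j = k)) i then b • Q' else a • Q)
        = (b * a ^ n) • Measure.pi (fun i => if i = k then Q' else Q) := by
    intro k
    have h1 : (fun i => if (fun j => decide (j = k)) i then b • Q' else a • Q)
        = fun i => (if i = k then b else a) • (if i = k then Q' else Q) := by
      funext i
      by_cases h : i = k <;> simp [h]
    rw [h1, @pi_smul Z _ (n+1) (fun i => if i = k then b else a)
      (fun i => by
        show (if i = k then b else a) ≠ ⊤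
        by_cases h : i = k
        · rw [if_pos h]; exact hbt
        · rw [if_neg h]; exact hat) (fun i => if i = k then Q' else Q)
      (fun i => by
        show IsFiniteMeasure (if i = k then Q' else Q)
        by_cases h : i = k
        · rw [if_pos h]; infer_instance
        · rw [if_neg h]; infer_instance)]
    congr 1
    rw [← Finset.mul_prod_erase Finset.univ _ (Finset.mem_univ k), if_pos rfl]
    congr 1
    rw [Finset.prod_congr rfl (fun i hi => if_neg (Finset.ne_of_mem_erase hi)),
      Finset.prod_const, Finset.card_erase_of_mem (Finset.mem_univ k), Finset.card_univ,
      Fintype.card_fin]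
    simp
  -- all the ν_k have the same integral as ν by symmetry
  have hsym : ∀ k : Fin (n+1),
      ∫⁻ w, Ei n (Et n E) w ∂(Measure.pi (fun i => if i = k then Q' else Q))
        = ∫⁻ w, Ei n (Et n E) w ∂(Measure.pi (fam Q Q' n)) := by
    intro k
    have hswap : ∀ i : Fin (n+1), Equiv.swap k (Fin.last n) i = Fin.last n ↔ i = k := by
      intro i
      constructor
      · intro h
        have h2 : Equiv.swap k (Fin.last n) i = Equiv.swap k (Fin.last n) k := by
          rw [h, Equiv.swap_apply_left]
        exact (Equiv.swap k (Fin.last n)).injective h2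
      · intro h; rw [h, Equiv.swap_apply_left]
    have h1 : (fun i => fam Q Q' n (Equiv.swap k (Fin.last n) i))
        = fun i => if i = k then Q' else Q := by
      funext i
      simp only [fam, hswap]
    rw [← h1, ← pi_map_perm (fam Q Q' n) (Equiv.swap k (Fin.last n)),
      lintegral_map (measurable_Ei (measurable_Et hE.1)) (measurable_permMap _)]
    refine lintegral_congr fun w => ?_
    exact Ei_comp_perm (Et n E) (Equiv.swap k (Fin.last n)) w
  set I := ∫⁻ w, Ei n (Et n E) w ∂(Measure.pi (fam Q Q' n)) with hI
  -- lower bound the expansion by the (n+1) single-swap terms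
  have hinj : Function.Injective (fun k : Fin (n+1) => fun j => decide (j = k)) := by
    intro k k' h
    have h2 := congrFun h k
    simpa using h2.symm
  have hlow : ∑ k : Fin (n+1), (b * a ^ n) * I
      ≤ ∫⁻ w, Ei n (Et n E) w ∂(Measure.pi fun _ : Fin (n+1) => Qbar) := by
    rw [hexp, lintegral_finset_sum_measure]
    have h1 : ∑ k : Fin (n+1), (b * a ^ n) * I
        = ∑ g ∈ Finset.image (fun k : Fin (n+1) => fun j => decide (j = k)) Finset.univ,
            ∫⁻ w, Ei n (Et n E) w ∂(Measure.pi (fun i => if g i then b • Q' else a • Q)) := by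
      rw [Finset.sum_image (fun k _ k' _ h => hinj h)]
      refine Finset.sum_congr rfl fun k _ => ?_
      rw [hterm k, lintegral_smul_measure, hsym k, hI, smul_eq_mul]
    rw [h1]
    exact Finset.sum_le_sum_of_subset (Finset.subset_univ _)
  have h2 : ((n : ℝ≥0∞) + 1) * ((b * a ^ n) * I) ≤ 1 := by
    calc ((n : ℝ≥0∞) + 1) * ((b * a ^ n) * I)
        = ∑ _k : Fin (n+1), (b * a ^ n) * I := by
          rw [Finset.sum_const, Finset.card_univ, Fintype.card_fin, nsmul_eq_mul]
          congr 1
          push_cast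
          ring
      _ ≤ _ := hlow.trans hbar
  have h3 : ((n : ℝ≥0∞) + 1) * b = 1 := ENNReal.mul_inv_cancel hc1 hc2
  have h4 : a ^ n * I ≤ 1 := by
    calc a ^ n * I = ((n : ℝ≥0∞) + 1) * b * (a ^ n * I) := by rw [h3, one_mul]
      _ = ((n : ℝ≥0∞) + 1) * ((b * a ^ n) * I) := by ring
      _ ≤ 1 := h2
  have h5 : I ≤ (a ^ n)⁻¹ := by
    have han0 : a ^ n ≠ 0 := pow_ne_zero n ha0
    have hant : a ^ n ≠ ∞ := ENNReal.pow_ne_top hat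
    calc I = (a ^ n)⁻¹ * (a ^ n * I) := by
          rw [← mul_assoc, ENNReal.inv_mul_cancel han0 hant, one_mul]
      _ ≤ (a ^ n)⁻¹ * 1 := mul_le_mul_right h4 _
      _ = (a ^ n)⁻¹ := mul_one _
  refine h5.trans ?_
  have h6 : (a ^ n)⁻¹ = (((n : ℝ≥0∞) + 1) / (n : ℝ≥0∞)) ^ n := by
    rw [ENNReal.inv_pow]
    congr 1
    rw [ha, ENNReal.inv_div (Or.inr (ENNReal.natCast_ne_top n)) (Or.inr hnR0)]
  rw [h6]
  have h7 : ((n : ℝ≥0∞) + 1) / (n : ℝ≥0∞) = ENNReal.ofReal (((n : ℝ) + 1) / (n : ℝ)) := by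
    have hn0 : (0:ℝ) < (n : ℝ) := by
      exact_mod_cast Nat.pos_of_ne_zero (by omega)
    rw [ENNReal.ofReal_div_of_pos hn0]
    congr 1
    · rw [ENNReal.ofReal_add (by positivity) (by norm_num), ENNReal.ofReal_natCast,
        ENNReal.ofReal_one]
    · rw [ENNReal.ofReal_natCast]
  rw [h7, ← ENNReal.ofReal_pow (by positivity)]
  exact ENNReal.ofReal_le_ofReal (real_ineq n hn)

end S7


namespace S7

variable {X Y : Type*} [MeasurableSpace X] [MeasurableSpace Y]

lemma measurable_snoc {n : ℕ} :
    Measurable (fun p : (Fin n → X × Y) × (X × Y) => (Fin.snoc p.1 p.2 : Fin (n+1) → X × Y)) := by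
  refine measurable_pi_lambda _ fun i => ?_
  induction i using Fin.lastCases with
  | last => simpa [Fin.snoc_last] using measurable_snd
  | cast j => simpa [Fin.snoc_castSucc, Function.comp_def] using (measurable_pi_apply j).comp measurable_fst

lemma measurable_withLabel {n : ℕ} :
    Measurable (fun p : (Fin (n+1) → X × Y) × Y => withLabel n p.1 p.2) := by
  refine measurable_pi_lambda _ fun i => ?_
  induction i using Fin.lastCases with
  | last =>
      simp only [withLabel, Fin.snoc_last]
      exact (measurable_fst.comp ((measurable_pi_apply (Fin.last n)).comp
        measurable_fst)).prodMk measurable_snd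
  | cast j =>
      simp only [withLabel, Fin.snoc_castSucc]
      exact (measurable_pi_apply (Fin.castSucc j)).comp measurable_fst

lemma measurable_G_inner {n : ℕ} (B : Kernel (X × Y) Y) [IsSFiniteKernel B]
    {F : (Fin (n+1) → X × Y) → ℝ≥0∞} (hF : Measurable F) :
    Measurable (fun z : Fin (n+1) → X × Y =>
      ∫⁻ y, F (withLabel n z y) ∂(B (z (Fin.last n)))) := by
  have h : (fun z : Fin (n+1) → X × Y => ∫⁻ y, F (withLabel n z y) ∂(B (z (Fin.last n))))
      = fun z => ∫⁻ y, F (withLabel n z y)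
          ∂((B.comap (fun z : Fin (n+1) → X × Y => z (Fin.last n))
              (measurable_pi_apply _)) z) := by
    funext z; rw [Kernel.comap_apply]
  rw [h]
  exact Measurable.lintegral_kernel_prod_right
    (by exact hF.comp measurable_withLabel :
      Measurable (Function.uncurry fun z y => F (withLabel n z y)))

lemma withLabel_snoc {n : ℕ} (t : Fin n → X × Y) (a : X × Y) (y : Y) :
    withLabel n (Fin.snoc t a) y = Fin.snoc t (a.1, y) := by
  unfold withLabel
  simp only [Fin.snoc_castSucc, Fin.snoc_last]

lemma stepB {n : ℕ} (Q : Measure (X × Y)) [IsProbabilityMeasure Q] (B : Kernel (X × Y) Y)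
    [IsMarkovKernel B] {f : (Fin (n+1) → X × Y) → ℝ≥0∞} (hf : Measurable f) :
    ∫⁻ z, ∫⁻ y, f (withLabel n z y) ∂(B (z (Fin.last n)))
        ∂(Measure.pi fun _ : Fin (n+1) => Q)
      = ∫⁻ w, f w
          ∂(Measure.pi (fam Q (Measure.map (fun p : (X × Y) × Y => (p.1.1, p.2)) (Q ⊗ₘ B)) n)) := by
  classical
  set Q' : Measure (X × Y) := Measure.map (fun p : (X × Y) × Y => (p.1.1, p.2)) (Q ⊗ₘ B)
    with hQ'def
  have hproj : Measurable (fun p : (X × Y) × Y => ((p.1.1, p.2) : X × Y)) :=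
    (measurable_fst.fst).prodMk measurable_snd
  haveI : IsProbabilityMeasure Q' := by
    rw [hQ'def]
    exact Measure.isProbabilityMeasure_map hproj.aemeasurable
  set e := MeasurableEquiv.piFinSuccAbove (fun _ : Fin (n+1) => X × Y) (Fin.last n) with he
  have hesymm : ∀ p : (X × Y) × (Fin n → X × Y), e.symm p = Fin.snoc p.2 p.1 := by
    intro p
    rw [he]
    show (Fin.insertNthEquiv (fun _ : Fin (n+1) => X × Y) (Fin.last n)) p = _
    have h0 : (Fin.insertNthEquiv (fun _ : Fin (n+1) => X × Y) (Fin.last n)) p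
        = Fin.insertNth (Fin.last n) p.1 p.2 := rfl
    rw [h0]
    exact Fin.insertNth_last' p.1 p.2
  -- the inner function
  set h : X × Y → ℝ≥0∞ := fun w => ∫⁻ t, f (Fin.snoc t w) ∂(Measure.pi fun _ : Fin n => Q)
    with hh
  have hsnocf : Measurable (fun p : (Fin n → X × Y) × (X × Y) => f (Fin.snoc p.1 p.2)) :=
    hf.comp measurable_snoc
  have hhm : Measurable h := by
    rw [hh]
    exact Measurable.lintegral_prod_left' (μ := Measure.pi fun _ : Fin n => Q) hsnocf
  -- LHS
  have hg : Measurable (fun z : Fin (n+1) → X × Y =>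
      ∫⁻ y, f (withLabel n z y) ∂(B (z (Fin.last n)))) := measurable_G_inner B hf
  have hmp := measurePreserving_piFinSuccAbove (fun _ : Fin (n+1) => Q) (Fin.last n)
  have hLHS1 : ∫⁻ z, ∫⁻ y, f (withLabel n z y) ∂(B (z (Fin.last n)))
        ∂(Measure.pi fun _ : Fin (n+1) => Q)
      = ∫⁻ p, ∫⁻ y, f (withLabel n (e.symm p) y) ∂(B ((e.symm p) (Fin.last n)))
          ∂(Q.prod (Measure.pi fun _ : Fin n => Q)) :=
    ((hmp.symm e).lintegral_comp hg).symm
  have hwle : ∀ (p : (X × Y) × (Fin n → X × Y)) (y : Y),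
      f (withLabel n (e.symm p) y) = f (Fin.snoc p.2 (p.1.1, y)) := by
    intro p y
    rw [hesymm, withLabel_snoc]
  have hlaste : ∀ p : (X × Y) × (Fin n → X × Y), (e.symm p) (Fin.last n) = p.1 := by
    intro p
    rw [hesymm]
    exact Fin.snoc_last _ _
  have hLHS2 : ∫⁻ p, ∫⁻ y, f (withLabel n (e.symm p) y) ∂(B ((e.symm p) (Fin.last n)))
        ∂(Q.prod (Measure.pi fun _ : Fin n => Q))
      = ∫⁻ a, ∫⁻ t, ∫⁻ y, f (Fin.snoc t (a.1, y)) ∂(B a)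
          ∂(Measure.pi fun _ : Fin n => Q) ∂Q := by
    have h1 : ∀ p : (X × Y) × (Fin n → X × Y),
        (∫⁻ y, f (withLabel n (e.symm p) y) ∂(B ((e.symm p) (Fin.last n))))
          = ∫⁻ y, f (Fin.snoc p.2 (p.1.1, y)) ∂(B p.1) := by
      intro p
      rw [hlaste]
      exact lintegral_congr fun y => by rw [hwle]
    rw [lintegral_congr h1]
    have h2 : Measurable (fun p : (X × Y) × (Fin n → X × Y) =>
        ∫⁻ y, f (Fin.snoc p.2 (p.1.1, y)) ∂(B p.1)) := by
      have h3 : Measurable (Function.uncurry fun (p : (X × Y) × (Fin n → X × Y)) (y : Y) =>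
          f (Fin.snoc p.2 (p.1.1, y))) := by
        refine hf.comp ?_
        exact measurable_snoc.comp
          ((measurable_snd.comp measurable_fst).prodMk
            (((measurable_fst.comp measurable_fst).fst).prodMk measurable_snd))
      have h4 := Measurable.lintegral_kernel_prod_right
        (κ := B.comap (fun p : (X × Y) × (Fin n → X × Y) => p.1) measurable_fst) h3
      simpa [Kernel.comap_apply] using h4
    exact lintegral_prod _ h2.aemeasurable
  have hLHS3 : ∀ a : X × Y,
      ∫⁻ t, ∫⁻ y, f (Fin.snoc t (a.1, y)) ∂(B a) ∂(Measure.pi fun _ : Fin n => Q)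
        = ∫⁻ y, h (a.1, y) ∂(B a) := by
    intro a
    refine lintegral_lintegral_swap ?_
    refine (Measurable.aemeasurable ?_)
    refine hf.comp ?_
    exact measurable_snoc.comp (measurable_fst.prodMk
      (measurable_const.prodMk measurable_snd))
  have hcp : ∫⁻ a, ∫⁻ y, h (a.1, y) ∂(B a) ∂Q = ∫⁻ w, h w ∂Q' := by
    rw [hQ'def, lintegral_map hhm hproj, Measure.lintegral_compProd
      (f := fun p : (X × Y) × Y => h (p.1.1, p.2)) (hhm.comp hproj)]
  -- RHS
  have hmp2 := measurePreserving_piFinSuccAbove (fam Q Q' n) (Fin.last n)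
  have hfam1 : fam Q Q' n (Fin.last n) = Q' := if_pos rfl
  have hfam2 : (fun j : Fin n => fam Q Q' n ((Fin.last n).succAbove j)) = fun _ => Q := by
    funext j
    simp only [fam, Fin.succAbove_last]
    exact if_neg (Fin.castSucc_lt_last j).ne
  rw [hfam1] at hmp2
  rw [hfam2] at hmp2
  have hRHS1 : ∫⁻ w, f w ∂(Measure.pi (fam Q Q' n))
      = ∫⁻ p, f (e.symm p) ∂(Q'.prod (Measure.pi fun _ : Fin n => Q)) :=
    ((hmp2.symm e).lintegral_comp hf).symm
  have hRHS2 : ∫⁻ p, f (e.symm p) ∂(Q'.prod (Measure.pi fun _ : Fin n => Q))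
      = ∫⁻ w, h w ∂Q' := by
    have h1 : ∀ p : (X × Y) × (Fin n → X × Y), f (e.symm p) = f (Fin.snoc p.2 p.1) :=
      fun p => by rw [hesymm]
    rw [lintegral_congr h1]
    rw [lintegral_prod _ ((by exact hsnocf.comp measurable_swap :
      Measurable fun p : (X × Y) × (Fin n → X × Y) => f (Fin.snoc p.2 p.1))).aemeasurable]
  rw [hLHS1, hLHS2, lintegral_congr hLHS3, hcp, hRHS1, hRHS2]

end S7


/-- Corollary: for any randomness e-variable `E`, the function
`G := e^{-1/2} ∫ √(E(z_1,…,z_n,x_{n+1},y) / E^{tX}(z_1,…,z_n,x_{n+1},y)) B(dy|z_{n+1})`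
(with `0/0 := 0`) is a randomness e-variable, where `E^{tX} := (E^t)^X`. -/
theorem stmt7 {X Y : Type*} [MeasurableSpace X] [Nonempty X] [MeasurableSpace Y]
    (n : ℕ) (hn : 1 ≤ n) (B : Kernel (X × Y) Y) [IsMarkovKernel B]
    (E : (Fin (n+1) → X × Y) → ℝ≥0∞) (hE : IsRandE n E) :
    IsRandE n (fun z =>
      ENNReal.ofReal (Real.exp (-(1/2))) *
        ∫⁻ y, (E (withLabel n z y) / EX n (Et n E) (withLabel n z y)) ^ ((1:ℝ)/2)
          ∂(B (z (Fin.last n)))) := by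
  classical
  have hEm : Measurable E := hE.1
  have hF0m : Measurable (fun w : Fin (n+1) → X × Y =>
      (E w / EX n (Et n E) w) ^ ((1:ℝ)/2)) :=
    (ENNReal.continuous_rpow_const.measurable).comp
      (hEm.div (S7.measurable_EX (S7.measurable_Et hEm)))
  have hGm : Measurable (fun z : Fin (n+1) → X × Y =>
      ∫⁻ y, (E (withLabel n z y) / EX n (Et n E) (withLabel n z y)) ^ ((1:ℝ)/2)
        ∂(B (z (Fin.last n)))) := S7.measurable_G_inner B hF0m
  constructor
  · exact hGm.const_mul _
  · intro Q hQ
    haveI := hQ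
    have hproj : Measurable (fun p : (X × Y) × Y => ((p.1.1, p.2) : X × Y)) :=
      (measurable_fst.fst).prodMk measurable_snd
    haveI hQ'p : IsProbabilityMeasure
        (Measure.map (fun p : (X × Y) × Y => (p.1.1, p.2)) (Q ⊗ₘ B)) :=
      Measure.isProbabilityMeasure_map hproj.aemeasurable
    set Q' : Measure (X × Y) := Measure.map (fun p : (X × Y) × Y => (p.1.1, p.2)) (Q ⊗ₘ B)
      with hQ'def
    set ν : Measure (Fin (n+1) → X × Y) := Measure.pi (S7.fam Q Q' n) with hν
    set f1 : (Fin (n+1) → X × Y) → ℝ≥0∞ := fun w => (E w / Et n E w) ^ ((1:ℝ)/2) with hf1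
    set g1 : (Fin (n+1) → X × Y) → ℝ≥0∞ := fun w => (Ei n (Et n E) w) ^ ((1:ℝ)/2) with hg1
    have hf1m : Measurable f1 := (ENNReal.continuous_rpow_const.measurable).comp
      (hEm.div (S7.measurable_Et hEm))
    have hg1m : Measurable g1 := (ENNReal.continuous_rpow_const.measurable).comp
      (S7.measurable_Ei (S7.measurable_Et hEm))
    have hCt : (((n+1 : ℕ) : ℝ≥0∞)) ^ (n+1) ≠ ∞ :=
      ENNReal.pow_ne_top (ENNReal.natCast_ne_top _)
    have hCb : ∀ w, E w ≤ ((n+1 : ℕ) : ℝ≥0∞) ^ (n+1) := S7.isRandE_bound hE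
    have hpt : ∀ w, (E w / EX n (Et n E) w) ^ ((1:ℝ)/2) ≤ f1 w * g1 w := by
      intro w
      rw [hf1, hg1]
      calc (E w / EX n (Et n E) w) ^ ((1:ℝ)/2)
          ≤ (E w / Et n E w * Ei n (Et n E) w) ^ ((1:ℝ)/2) :=
            ENNReal.rpow_le_rpow (S7.key_pointwise hCt hCb w) (by norm_num)
        _ = _ := ENNReal.mul_rpow_of_nonneg _ _ (by norm_num)
    have hstepB : ∫⁻ z, ∫⁻ y, f1 (withLabel n z y) * g1 (withLabel n z y)
          ∂(B (z (Fin.last n))) ∂(Measure.pi fun _ : Fin (n+1) => Q)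
        = ∫⁻ w, f1 w * g1 w ∂ν := by
      rw [hν, hQ'def]
      exact S7.stepB Q B (hf1m.mul hg1m)
    have hc : ∫⁻ z, ENNReal.ofReal (Real.exp (-(1/2))) *
          ∫⁻ y, (E (withLabel n z y) / EX n (Et n E) (withLabel n z y)) ^ ((1:ℝ)/2)
            ∂(B (z (Fin.last n))) ∂(Measure.pi fun _ : Fin (n+1) => Q)
        = ENNReal.ofReal (Real.exp (-(1/2))) *
          ∫⁻ z, ∫⁻ y, (E (withLabel n z y) / EX n (Et n E) (withLabel n z y)) ^ ((1:ℝ)/2)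
            ∂(B (z (Fin.last n))) ∂(Measure.pi fun _ : Fin (n+1) => Q) :=
      lintegral_const_mul _ hGm
    rw [hc]
    have hsq1 : ∀ w, f1 w ^ (2:ℝ) = E w / Et n E w := by
      intro w
      rw [hf1, ← ENNReal.rpow_mul]
      norm_num
    have hsq2 : ∀ w, g1 w ^ (2:ℝ) = Ei n (Et n E) w := by
      intro w
      rw [hg1, ← ENNReal.rpow_mul]
      norm_num
    have hconj : Real.HolderConjugate 2 2 := Real.HolderConjugate.two_two
    calc ENNReal.ofReal (Real.exp (-(1/2))) *
          ∫⁻ z, ∫⁻ y, (E (withLabel n z y) / EX n (Et n E) (withLabel n z y)) ^ ((1:ℝ)/2)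
            ∂(B (z (Fin.last n))) ∂(Measure.pi fun _ : Fin (n+1) => Q)
        ≤ ENNReal.ofReal (Real.exp (-(1/2))) * ∫⁻ w, f1 w * g1 w ∂ν := by
          refine mul_le_mul_right ?_ _
          rw [← hstepB]
          exact lintegral_mono fun z => lintegral_mono fun y => hpt _
      _ ≤ ENNReal.ofReal (Real.exp (-(1/2))) *
            ((∫⁻ w, f1 w ^ (2:ℝ) ∂ν) ^ ((1:ℝ)/2) * (∫⁻ w, g1 w ^ (2:ℝ) ∂ν) ^ ((1:ℝ)/2)) := by
          refine mul_le_mul_right ?_ _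
          have h := ENNReal.lintegral_mul_le_Lp_mul_Lq ν hconj hf1m.aemeasurable
            hg1m.aemeasurable
          simpa using h
      _ ≤ ENNReal.ofReal (Real.exp (-(1/2))) *
            (1 * ENNReal.ofReal (Real.exp 1) ^ ((1:ℝ)/2)) := by
          refine mul_le_mul_right (mul_le_mul' ?_ ?_) _
          · calc (∫⁻ w, f1 w ^ (2:ℝ) ∂ν) ^ ((1:ℝ)/2)
                = (∫⁻ w, E w / Et n E w ∂ν) ^ ((1:ℝ)/2) := by
                  rw [lintegral_congr hsq1]
              _ ≤ (1 : ℝ≥0∞) ^ ((1:ℝ)/2) :=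
                  ENNReal.rpow_le_rpow (S7.stepC hEm Q Q') (by norm_num)
              _ = 1 := ENNReal.one_rpow _
          · calc (∫⁻ w, g1 w ^ (2:ℝ) ∂ν) ^ ((1:ℝ)/2)
                = (∫⁻ w, Ei n (Et n E) w ∂ν) ^ ((1:ℝ)/2) := by
                  rw [lintegral_congr hsq2]
              _ ≤ (ENNReal.ofReal (Real.exp 1)) ^ ((1:ℝ)/2) :=
                  ENNReal.rpow_le_rpow (S7.stepD hE hn Q Q') (by norm_num)
      _ = 1 := by
          rw [one_mul, ENNReal.ofReal_rpow_of_pos (Real.exp_pos 1), Real.exp_one_rpow,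
            ← ENNReal.ofReal_mul (Real.exp_nonneg _), ← Real.exp_add]
          norm_num


end
end

section
/- A measurable function E : Z^{n+1} → [0,∞] is an exchangeability e-variable if and only if for every data sequence (z_1,…,z_{n+1}) ∈ Z^{n+1}, (1/(n+1)!) Σ_π E(z_{π(1)},…,z_{π(n+1)}) ≤ 1, where the sum is over all permutations π of {1,…,n+1}. -/
open MeasureTheory ProbabilityTheory
open scoped ENNReal NNReal

noncomputable section

/-- A measurable `E : Z^{n+1} → [0,∞]` is an exchangeability e-variable if and only if
`(1/(n+1)!) Σ_π E(z_{π(1)},…,z_{π(n+1)}) ≤ 1` for every data sequence. -/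
theorem stmt9 {Z : Type*} [MeasurableSpace Z] (n : ℕ) (hn : 1 ≤ n)
    (E : (Fin (n+1) → Z) → ℝ≥0∞) (hE : Measurable E) :
    IsExchE n E ↔ ∀ z : Fin (n+1) → Z,
      (∑ π : Equiv.Perm (Fin (n+1)), E (fun i => z (π i))) / (Nat.factorial (n+1) : ℝ≥0∞) ≤ 1 := by
  set N : ℝ≥0∞ := (Nat.factorial (n+1) : ℝ≥0∞) with hNdef
  have hN0 : N ≠ 0 := by
    simp [hNdef, Nat.factorial_ne_zero]
  have hNtop : N ≠ ⊤ := by simp [hNdef]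
  have hmeas : ∀ π : Equiv.Perm (Fin (n+1)),
      Measurable (fun (w : Fin (n+1) → Z) i => w (π i)) := fun π =>
    measurable_pi_lambda _ fun i => measurable_pi_apply _
  constructor
  · rintro ⟨-, hR⟩ z
    set R : Measure (Fin (n+1) → Z) :=
      N⁻¹ • ∑ π : Equiv.Perm (Fin (n+1)), Measure.dirac (fun i => z (π i)) with hRdef
    have hprob : IsProbabilityMeasure R := by
      constructor
      rw [hRdef, Measure.smul_apply, Measure.finset_sum_apply]
      simp only [measure_univ, Finset.sum_const, Finset.card_univ, Fintype.card_perm,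
        Fintype.card_fin, nsmul_eq_mul, mul_one, smul_eq_mul]
      exact ENNReal.inv_mul_cancel hN0 hNtop
    have hexch : IsExchangeable n R := by
      intro π'
      ext s hs
      rw [Measure.map_apply (hmeas π') hs, hRdef, Measure.smul_apply, Measure.smul_apply,
        Measure.finset_sum_apply, Measure.finset_sum_apply]
      congr 1
      have : ∀ π : Equiv.Perm (Fin (n+1)),
          Measure.dirac (fun i => z (π i)) ((fun (w : Fin (n+1) → Z) i => w (π' i)) ⁻¹' s)
            = Measure.dirac (fun i => z ((π * π') i)) s := by
        intro π
        rw [Measure.dirac_apply' _ ((hmeas π') hs), Measure.dirac_apply' _ hs]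
        rfl
      simp only [this]
      exact Equiv.sum_comp (Equiv.mulRight π') fun π => Measure.dirac (fun i => z (π i)) s
    have := hR R hprob hexch
    rw [hRdef, lintegral_smul_measure, lintegral_finset_sum_measure] at this
    simp only [lintegral_dirac' _ hE] at this
    rwa [ENNReal.div_eq_inv_mul]
  · intro h
    refine ⟨hE, fun R hRprob hRexch => ?_⟩
    have key : ∀ π : Equiv.Perm (Fin (n+1)),
        ∫⁻ z, E (fun i => z (π i)) ∂(R) = ∫⁻ z, E z ∂(R) := by
      intro π
      conv_rhs => rw [← hRexch π]
      rw [lintegral_map hE (hmeas π)]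
    have hmul : N * ∫⁻ z, E z ∂(R) ≤ N * 1 := by
      calc N * ∫⁻ z, E z ∂(R)
          = ∑ π : Equiv.Perm (Fin (n+1)), ∫⁻ z, E (fun i => z (π i)) ∂(R) := by
            simp only [key, Finset.sum_const, Finset.card_univ, Fintype.card_perm,
              Fintype.card_fin, nsmul_eq_mul, hNdef]
        _ = ∫⁻ z, ∑ π : Equiv.Perm (Fin (n+1)), E (fun i => z (π i)) ∂(R) := by
            rw [lintegral_finset_sum]
            exact fun π _ => hE.comp (hmeas π)
        _ ≤ ∫⁻ _, N ∂(R) := by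
            refine lintegral_mono fun z => ?_
            have := h z
            rwa [ENNReal.div_le_iff hN0 hNtop, one_mul] at this
        _ = N * 1 := by simp [lintegral_const, measure_univ]
    exact (ENNReal.mul_le_mul_iff_right hN0 hNtop).mp hmul

end
end

section
/- For every measurable E : Z^{n+1} → [0,∞], the function E^t is train-invariant; moreover, if E is an exchangeability e-variable then E^t is an exchangeability e-variable (hence a conformal e-predictor), and if E is a randomness e-variable then E^t is a randomness e-variable. -/
open MeasureTheory ProbabilityTheory
open scoped ENNReal NNReal

noncomputable section

/-- Extend a permutation of `Fin n` to `Fin (n+1)`, fixing the last coordinate. -/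
def permExt (n : ℕ) (σ : Equiv.Perm (Fin n)) : Equiv.Perm (Fin (n+1)) :=
  Equiv.permCongr finSuccEquivLast.symm σ.optionCongr

lemma permExt_castSucc (n : ℕ) (σ : Equiv.Perm (Fin n)) (i : Fin n) :
    permExt n σ (Fin.castSucc i) = Fin.castSucc (σ i) := by
  simp [permExt, Equiv.permCongr_apply]

lemma permExt_last (n : ℕ) (σ : Equiv.Perm (Fin n)) :
    permExt n σ (Fin.last n) = Fin.last n := by
  simp [permExt, Equiv.permCongr_apply]

lemma permExt_mul (n : ℕ) (τ σ : Equiv.Perm (Fin n)) (j : Fin (n+1)) :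
    permExt n τ (permExt n σ j) = permExt n (τ * σ) j := by
  induction j using Fin.lastCases with
  | last => simp [permExt_last]
  | cast i => simp [permExt_castSucc]

lemma snoc_eq_comp {Z : Type*} (n : ℕ) (z : Fin (n+1) → Z) (σ : Equiv.Perm (Fin n)) :
    (Fin.snoc (fun i => z (Fin.castSucc (σ i))) (z (Fin.last n)) : Fin (n+1) → Z)
      = fun j => z (permExt n σ j) := by
  funext j
  induction j using Fin.lastCases with
  | last => simp [permExt_last]
  | cast i => simp [permExt_castSucc]

lemma Et_eq {Z : Type*} (n : ℕ) (E : (Fin (n+1) → Z) → ℝ≥0∞) (z : Fin (n+1) → Z) :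
    Et n E z = (∑ σ : Equiv.Perm (Fin n), E (fun j => z (permExt n σ j)))
      * ((Nat.factorial n : ℝ≥0∞))⁻¹ := by
  rw [Et, div_eq_mul_inv]
  congr 1
  exact Finset.sum_congr rfl fun σ _ => by rw [snoc_eq_comp]

lemma measurable_compPerm {Z : Type*} [MeasurableSpace Z] (n : ℕ) (σ : Equiv.Perm (Fin n)) :
    Measurable (fun (z : Fin (n+1) → Z) j => z (permExt n σ j)) :=
  measurable_pi_lambda _ fun j => measurable_pi_apply _

lemma Et_lintegral_le {Z : Type*} [MeasurableSpace Z] (n : ℕ)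
    (E : (Fin (n+1) → Z) → ℝ≥0∞) (hE : Measurable E) (R : Measure (Fin (n+1) → Z))
    (hR : ∀ σ : Equiv.Perm (Fin n),
      Measure.map (fun z j => z (permExt n σ j)) R = R)
    (hb : ∫⁻ z, E z ∂(R) ≤ 1) :
    ∫⁻ z, Et n E z ∂(R) ≤ 1 := by
  have hfac : ((Nat.factorial n : ℝ≥0∞)) ≠ 0 := by
    exact_mod_cast Nat.cast_ne_zero.mpr (Nat.factorial_ne_zero n)
  have hfacT : ((Nat.factorial n : ℝ≥0∞)) ≠ ⊤ := by simp
  calc ∫⁻ z, Et n E z ∂(R)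
      = (∫⁻ z, ∑ σ : Equiv.Perm (Fin n), E (fun j => z (permExt n σ j)) ∂(R))
          * ((Nat.factorial n : ℝ≥0∞))⁻¹ := by
        simp_rw [Et_eq]
        exact lintegral_mul_const' _ _ (by simp [hfac])
    _ = (∑ σ : Equiv.Perm (Fin n), ∫⁻ z, E (fun j => z (permExt n σ j)) ∂(R))
          * ((Nat.factorial n : ℝ≥0∞))⁻¹ := by
        rw [lintegral_finset_sum]
        exact fun σ _ => hE.comp (measurable_compPerm n σ)
    _ ≤ ((Nat.factorial n : ℝ≥0∞)) * ((Nat.factorial n : ℝ≥0∞))⁻¹ := by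
        refine mul_le_mul_left ?_ _
        have : ∀ σ : Equiv.Perm (Fin n),
            ∫⁻ z, E (fun j => z (permExt n σ j)) ∂(R) ≤ 1 := by
          intro σ
          rw [← lintegral_map hE (measurable_compPerm n σ), hR σ]
          exact hb
        calc (∑ σ : Equiv.Perm (Fin n), ∫⁻ z, E (fun j => z (permExt n σ j)) ∂(R))
            ≤ ∑ _σ : Equiv.Perm (Fin n), (1 : ℝ≥0∞) :=
              Finset.sum_le_sum fun σ _ => this σ
          _ = (Nat.factorial n : ℝ≥0∞) := by
              simp [Fintype.card_perm]
    _ = 1 := ENNReal.mul_inv_cancel hfac hfacT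

lemma map_pi_perm {Z : Type*} [MeasurableSpace Z] (n : ℕ) (Q : Measure Z)
    [IsProbabilityMeasure Q] (π : Equiv.Perm (Fin (n+1))) :
    Measure.map (fun (z : Fin (n+1) → Z) i => z (π i)) (Measure.pi fun _ => Q)
      = Measure.pi fun _ => Q := by
  have h := (measurePreserving_piCongrLeft (fun _ : Fin (n+1) => Q) π.symm).map_eq
  have heq : (⇑(MeasurableEquiv.piCongrLeft (fun _ : Fin (n+1) => Z) π.symm))
      = fun (z : Fin (n+1) → Z) i => z (π i) := by
    funext z i
    simp [MeasurableEquiv.coe_piCongrLeft, Equiv.piCongrLeft_apply_apply]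
    rw [Equiv.piCongrLeft_apply_eq_cast]
    simp
  rwa [heq] at h

/-- `E^t` is always train-invariant; it is an exchangeability e-variable (hence a conformal
e-predictor) whenever `E` is, and a randomness e-variable whenever `E` is. -/
theorem stmt12 {Z : Type*} [MeasurableSpace Z] (n : ℕ) (hn : 1 ≤ n)
    (E : (Fin (n+1) → Z) → ℝ≥0∞) (hE : Measurable E) :
    TrainInv n (Et n E) ∧
      (IsExchE n E → IsExchE n (Et n E)) ∧
      (IsRandE n E → IsRandE n (Et n E)) := by
  have hmeas : Measurable (Et n E) := by
    have : Et n E = fun z => (∑ σ : Equiv.Perm (Fin n), E (fun j => z (permExt n σ j)))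
        * ((Nat.factorial n : ℝ≥0∞))⁻¹ := funext (Et_eq n E)
    rw [this]
    exact (Finset.measurable_sum _ fun σ _ => hE.comp (measurable_compPerm n σ)).mul_const _
  refine ⟨?_, ?_, ?_⟩
  · intro z τ
    rw [snoc_eq_comp]
    simp_rw [Et_eq]
    congr 1
    refine Fintype.sum_equiv (Equiv.mulLeft τ) _ _ fun σ => ?_
    congr 1
    funext j
    rw [permExt_mul]
    rfl
  · rintro ⟨-, hb⟩
    refine ⟨hmeas, fun R hRp hRe => ?_⟩
    exact Et_lintegral_le n E hE R (fun σ => hRe (permExt n σ)) (hb R hRp hRe)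
  · rintro ⟨-, hb⟩
    refine ⟨hmeas, fun Q hQ => ?_⟩
    exact Et_lintegral_le n E hE _ (fun σ => map_pi_perm n Q (permExt n σ)) (hb Q hQ)

end
end

section
/- If G₂ : Z^{n+1} → [0,∞] is an invariant randomness e-variable (a randomness e-variable invariant under all permutations of the n+1 coordinates) and G₃ : Z^{n+1} → [0,∞] is an exchangeability e-variable, then the pointwise product G₂·G₃ is a randomness e-variable. -/
open MeasureTheory ProbabilityTheory
open scoped ENNReal NNReal

noncomputable section

/-- If `G₂` is an invariant randomness e-variable and `G₃` is an exchangeability e-variable,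
then the pointwise product `G₂·G₃` is a randomness e-variable. -/
theorem stmt13 {Z : Type*} [MeasurableSpace Z] (n : ℕ) (hn : 1 ≤ n)
    (G₂ G₃ : (Fin (n+1) → Z) → ℝ≥0∞)
    (hG₂ : IsRandE n G₂)
    (hinv : ∀ (z : Fin (n+1) → Z) (π : Equiv.Perm (Fin (n+1))),
      G₂ (fun i => z (π i)) = G₂ z)
    (hG₃ : IsExchE n G₃) :
    IsRandE n (fun z => G₂ z * G₃ z) := by
  obtain ⟨hG₂m, hG₂b⟩ := hG₂
  obtain ⟨hG₃m, hG₃b⟩ := hG₃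
  refine ⟨hG₂m.mul hG₃m, fun Q hQ => ?_⟩
  set μ : Measure (Fin (n+1) → Z) := Measure.pi (fun _ : Fin (n+1) => Q) with hμdef
  haveI : IsProbabilityMeasure μ := by
    constructor
    rw [hμdef]
    simp [Measure.pi_univ]
  -- invariance of μ under coordinate permutations
  have hmapμ : ∀ π : Equiv.Perm (Fin (n+1)),
      Measure.map (fun z (i : Fin (n+1)) => z (π i)) μ = μ := by
    intro π
    have h := (measurePreserving_piCongrLeft (fun _ : Fin (n+1) => Q) π.symm).map_eq
    have hfun : ⇑(MeasurableEquiv.piCongrLeft (fun _ : Fin (n+1) => Z) π.symm)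
        = fun z (i : Fin (n+1)) => z (π i) := by
      funext z i
      conv_lhs => rw [show i = π.symm (π i) from (π.symm_apply_apply i).symm]
      rw [MeasurableEquiv.coe_piCongrLeft, Equiv.piCongrLeft_apply_apply]
    rw [hfun] at h
    exact h
  have hTm : ∀ π : Equiv.Perm (Fin (n+1)),
      Measurable (fun z (i : Fin (n+1)) => z (π i) : (Fin (n+1) → Z) → (Fin (n+1) → Z)) :=
    fun π => measurable_pi_lambda _ (fun i => measurable_pi_apply _)
  set R : Measure (Fin (n+1) → Z) := μ.withDensity G₂ with hRdef
  have hRkey : ∫⁻ z, G₂ z * G₃ z ∂μ = ∫⁻ z, G₃ z ∂(R) := by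
    rw [hRdef, lintegral_withDensity_eq_lintegral_mul μ hG₂m hG₃m]
    rfl
  have hRuniv : R Set.univ ≤ 1 := by
    rw [hRdef, withDensity_apply _ MeasurableSet.univ, Measure.restrict_univ]
    exact hG₂b Q hQ
  -- R is exchangeable
  have hRexch : ∀ π : Equiv.Perm (Fin (n+1)),
      Measure.map (fun z (i : Fin (n+1)) => z (π i)) R = R := by
    intro π
    refine Measure.ext fun s hs => ?_
    rw [Measure.map_apply (hTm π) hs, hRdef,
      withDensity_apply _ ((hTm π) hs), withDensity_apply _ hs,
      ← lintegral_indicator ((hTm π) hs), ← lintegral_indicator hs]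
    have hind : (Set.indicator ((fun z (i : Fin (n+1)) => z (π i)) ⁻¹' s) G₂)
        = fun z => Set.indicator s G₂ (fun i => z (π i)) := by
      funext z
      by_cases hz : (fun i => z (π i)) ∈ s
      · rw [Set.indicator_of_mem (show z ∈ (fun z (i : Fin (n+1)) => z (π i)) ⁻¹' s from hz),
          Set.indicator_of_mem hz, hinv z π]
      · rw [Set.indicator_of_notMem
          (show z ∉ (fun z (i : Fin (n+1)) => z (π i)) ⁻¹' s from hz),
          Set.indicator_of_notMem hz]
    rw [hind]
    have := lintegral_map (μ := μ) (f := Set.indicator s G₂)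
      (g := fun z (i : Fin (n+1)) => z (π i)) (hG₂m.indicator hs) (hTm π)
    rw [hmapμ π] at this
    exact this.symm
  rw [hRkey]
  -- normalize R
  by_cases hc : R Set.univ = 0
  · have : R = 0 := Measure.measure_univ_eq_zero.mp hc
    rw [this]
    simp
  · set c : ℝ≥0∞ := R Set.univ with hcdef
    have hcne : c ≠ 0 := hc
    have hcnetop : c ≠ ∞ := ne_top_of_le_ne_top ENNReal.one_ne_top hRuniv
    set P : Measure (Fin (n+1) → Z) := c⁻¹ • R with hPdef
    haveI hP : IsProbabilityMeasure P := by
      constructor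
      rw [hPdef]
      simp only [Measure.smul_apply, smul_eq_mul]
      rw [← hcdef, ENNReal.inv_mul_cancel hcne hcnetop]
    have hPexch : IsExchangeable n P := by
      intro π
      rw [hPdef, Measure.map_smul, hRexch π]
    have hb := hG₃b P hP hPexch
    rw [hPdef, lintegral_smul_measure] at hb
    have h3 : ∫⁻ z, G₃ z ∂(R) ≤ c := by
      calc ∫⁻ z, G₃ z ∂(R) = c * (c⁻¹ * ∫⁻ z, G₃ z ∂(R)) := by
            rw [← mul_assoc, ENNReal.mul_inv_cancel hcne hcnetop, one_mul]
        _ ≤ c * 1 := mul_le_mul_right hb c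
        _ = c := mul_one c
    exact h3.trans hRuniv

end
end

section
/- For each constant c ∈ (0,1) and each integer m ≥ 2 there exists N such that for every n ≥ N the following function E : Y^{n+1} → [0,∞), where Y = {0,1,…,m−1}, is a randomness e-variable: E(y_1,…,y_{n+1}) := c·m if both (i) y_1 + ⋯ + y_{n+1} ≡ 0 (mod m) and (ii) for every y ∈ Y the count k_y := |{i ∈ {1,…,n+1} : y_i = y}| satisfies |k_y − n/m| ≤ 0.1·n/m; and E(y_1,…,y_{n+1}) := 0 otherwise. That is, ∫ E dQ^{n+1} ≤ 1 for every probability measure Q on Y. -/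
open MeasureTheory ProbabilityTheory
open scoped ENNReal NNReal

noncomputable section

section Aux18
open Finset
variable {m n : ℕ}

private lemma master18 (f : Fin (n+1) → Fin m → ℝ) :
    ∑ y : Fin (n+1) → Fin m, ∏ i, f i (y i) = ∏ i, ∑ a, f i a := by
  rw [Finset.prod_univ_sum, Fintype.piFinset_univ]

private lemma total_mass (q : Fin m → ℝ) (hq1 : ∑ a, q a = 1) :
    ∑ y : Fin (n+1) → Fin m, ∏ i, q (y i) = 1 := by
  rw [master18 (fun _ a => q a)]; simp [hq1]

private lemma sum_comp_cnt (y : Fin (n+1) → Fin m) (h : Fin m → ℝ) :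
    ∑ i, h (y i) = ∑ a, ((univ.filter fun i => y i = a).card : ℝ) * h a := by
  classical
  rw [← Finset.sum_fiberwise univ y (fun i => h (y i))]
  refine Finset.sum_congr rfl fun a _ => ?_
  rw [Finset.sum_congr rfl (fun i hi => by rw [(Finset.mem_filter.mp hi).2])]
  simp [mul_comm]

private lemma variance (q : Fin m → ℝ) (hq1 : ∑ a, q a = 1) (a : Fin m) :
    ∑ y : Fin (n+1) → Fin m, (∏ i, q (y i)) *
      (((univ.filter fun i => y i = a).card : ℝ) - (n+1) * q a)^2
      = (n+1) * (q a * (1 - q a)) := by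
  classical
  set g : Fin m → ℝ := fun b => (if b = a then (1:ℝ) else 0) - q a with hg
  have hsum_g : ∀ b : Fin m, ∑ b, q b * g b = 0 := by
    intro _
    simp only [hg, mul_sub, Finset.sum_sub_distrib, mul_ite, mul_one, mul_zero,
      Finset.sum_ite_eq', Finset.mem_univ, if_true]
    rw [← Finset.sum_mul, hq1]; ring
  have hsum_g2 : ∑ b, q b * (g b)^2 = q a * (1 - q a) := by
    have h1 : ∀ b : Fin m, q b * (g b)^2
        = q b * (if b = a then 1 else 0) - 2 * q a * (q b * (if b = a then 1 else 0))
          + q a^2 * q b := by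
      intro b; by_cases hb : b = a <;> simp [hg, hb] <;> ring
    rw [Finset.sum_congr rfl fun b _ => h1 b]
    simp only [Finset.sum_add_distrib, Finset.sum_sub_distrib, mul_ite, mul_one, mul_zero,
      Finset.sum_ite_eq', Finset.mem_univ, if_true, ← Finset.sum_mul, ← Finset.mul_sum, hq1]
    ring
  have hdev : ∀ y : Fin (n+1) → Fin m,
      ((univ.filter fun i => y i = a).card : ℝ) - (n+1) * q a = ∑ i, g (y i) := by
    intro y
    simp only [hg, Finset.sum_sub_distrib, Finset.sum_const, Finset.card_univ,
      Fintype.card_fin, nsmul_eq_mul]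
    rw [Finset.sum_boole]
    push_cast
    ring
  have key : ∀ i i' : Fin (n+1), ∑ y : Fin (n+1) → Fin m, (∏ j, q (y j)) * (g (y i) * g (y i'))
      = if i = i' then q a * (1 - q a) else 0 := by
    intro i i'
    have hrw : ∀ y : Fin (n+1) → Fin m, (∏ j, q (y j)) * (g (y i) * g (y i'))
        = ∏ j, (q (y j) * (if j = i then g (y j) else 1) * (if j = i' then g (y j) else 1)) := by
      intro y
      rw [Finset.prod_mul_distrib, Finset.prod_mul_distrib]
      simp [Finset.prod_ite_eq', mul_assoc]
    rw [Finset.sum_congr rfl fun y _ => hrw y,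
      master18 (fun j b => q b * (if j = i then g b else 1) * (if j = i' then g b else 1))]
    by_cases hii : i = i'
    · subst hii
      simp only [if_true]
      rw [Finset.prod_eq_single i]
      · simp only [eq_self_iff_true, if_true]
        rw [show (∑ b, q b * g b * g b) = ∑ b, q b * (g b)^2 from
          Finset.sum_congr rfl fun b _ => by ring, hsum_g2]
      · intro j _ hj
        simp [hj, hq1]
      · simp
    · rw [if_neg hii, Finset.prod_eq_zero (Finset.mem_univ i)]
      simp only [if_pos rfl, if_neg hii, mul_one]
      exact hsum_g a
  calc ∑ y : Fin (n+1) → Fin m, (∏ i, q (y i)) *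
      (((univ.filter fun i => y i = a).card : ℝ) - (n+1) * q a)^2
      = ∑ y : Fin (n+1) → Fin m, ∑ i, ∑ i', (∏ j, q (y j)) * (g (y i) * g (y i')) := by
        refine Finset.sum_congr rfl fun y _ => ?_
        rw [hdev y, sq, Finset.sum_mul_sum, Finset.mul_sum]
        exact Finset.sum_congr rfl fun i _ => by rw [Finset.mul_sum]
    _ = ∑ i : Fin (n+1), ∑ i', ∑ y : Fin (n+1) → Fin m, (∏ j, q (y j)) * (g (y i) * g (y i')) := by
        rw [Finset.sum_comm]
        exact Finset.sum_congr rfl fun i _ => Finset.sum_comm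
    _ = ∑ i : Fin (n+1), ∑ i', if i = i' then q a * (1 - q a) else 0 := by
        exact Finset.sum_congr rfl fun i _ => Finset.sum_congr rfl fun i' _ => key i i'
    _ = (n+1) * (q a * (1 - q a)) := by
        simp [Finset.sum_ite_eq]
private def scc (hm : 0 < m) (a : Fin m) : Fin m := ⟨(a.val+1) % m, Nat.mod_lt _ hm⟩

private lemma scc_inj (hm : 0 < m) : Function.Injective (scc hm) := by
  intro a b hab
  have h : (a.val + 1) % m = (b.val + 1) % m := congrArg Fin.val hab
  have h2 : (a.val + 1) % m = (a.val % m + 1 % m) % m := by rw [Nat.add_mod]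
  have h3 : a.val % m = b.val % m := Nat.ModEq.add_right_cancel' 1 h
  exact Fin.ext (by rwa [Nat.mod_eq_of_lt a.isLt, Nat.mod_eq_of_lt b.isLt] at h3)

private def upd (hm : 0 < m) (i : Fin (n+1)) (y : Fin (n+1) → Fin m) : Fin (n+1) → Fin m :=
  Function.update y i (scc hm (y i))

private lemma upd_inj (hm : 0 < m) (i : Fin (n+1)) : Function.Injective (upd hm i) := by
  intro y y' h
  funext j
  by_cases hj : j = i
  · subst hj
    have h1 : scc hm (y j) = scc hm (y' j) := by
      have := congrFun h j
      simpa [upd, Function.update_self] using this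
    exact scc_inj hm h1
  · have := congrFun h j
    simpa [upd, Function.update_of_ne hj] using this

private lemma upd_sum_mod (hm : 0 < m) (i : Fin (n+1)) (y : Fin (n+1) → Fin m) :
    (∑ j, ((upd hm i y) j).val) % m = ((∑ j, (y j).val) + 1) % m := by
  classical
  have hval : ∀ (b : Fin m) (j : Fin (n+1)),
      ((Function.update y i b) j).val = Function.update (fun j => (y j).val) i b.val j := by
    intro b j
    simp [Function.update_apply, apply_ite Fin.val]
  have h1 : ∑ j, ((upd hm i y) j).val
      = (scc hm (y i)).val + ∑ j ∈ univ \ {i}, (y j).val := by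
    simp only [upd]
    rw [Finset.sum_congr rfl fun j _ => hval (scc hm (y i)) j]
    rw [Finset.sum_update_of_mem (Finset.mem_univ i)]
  have h2 : ∑ j, (y j).val = (y i).val + ∑ j ∈ univ \ {i}, (y j).val := by
    conv_lhs => rw [show y = Function.update y i (y i) by simp]
    rw [Finset.sum_congr rfl fun j _ => hval (y i) j]
    rw [Finset.sum_update_of_mem (Finset.mem_univ i)]
  rw [h1, h2]
  have : (scc hm (y i)).val % m = ((y i).val + 1) % m := by
    simp [scc]
  calc ((scc hm (y i)).val + ∑ j ∈ univ \ {i}, (y j).val) % m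
      = ((scc hm (y i)).val % m + (∑ j ∈ univ \ {i}, (y j).val) % m) % m := by rw [Nat.add_mod]
    _ = (((y i).val + 1) % m + (∑ j ∈ univ \ {i}, (y j).val) % m) % m := by rw [this]
    _ = (((y i).val + 1) + ∑ j ∈ univ \ {i}, (y j).val) % m := by rw [← Nat.add_mod]
    _ = _ := by ring_nf

private lemma upd_cnt (hm : 0 < m) (i : Fin (n+1)) (y : Fin (n+1) → Fin m) (a : Fin m) :
    (univ.filter fun j => (upd hm i y) j = a).card ≤ (univ.filter fun j => y j = a).card + 1
    ∧ (univ.filter fun j => y j = a).card ≤ (univ.filter fun j => (upd hm i y) j = a).card + 1 := by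
  classical
  constructor
  · calc (univ.filter fun j => (upd hm i y) j = a).card
        ≤ ((univ.filter fun j => y j = a) ∪ {i}).card := by
          apply Finset.card_le_card
          intro j hj
          rw [Finset.mem_filter] at hj
          by_cases hji : j = i
          · exact Finset.mem_union_right _ (by simp [hji])
          · exact Finset.mem_union_left _ (Finset.mem_filter.mpr ⟨Finset.mem_univ j, by
              simpa [upd, Function.update_of_ne hji] using hj.2⟩)
      _ ≤ _ := (Finset.card_union_le _ _).trans (by simp)
  · calc (univ.filter fun j => y j = a).card
        ≤ ((univ.filter fun j => (upd hm i y) j = a) ∪ {i}).card := by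
          apply Finset.card_le_card
          intro j hj
          rw [Finset.mem_filter] at hj
          by_cases hji : j = i
          · exact Finset.mem_union_right _ (by simp [hji])
          · exact Finset.mem_union_left _ (Finset.mem_filter.mpr ⟨Finset.mem_univ j, by
              simpa [upd, Function.update_of_ne hji] using hj.2⟩)
      _ ≤ _ := (Finset.card_union_le _ _).trans (by simp)

private lemma wt_upd (hm : 0 < m) (q : Fin m → ℝ) (hq0 : ∀ a, 0 < q a)
    (i : Fin (n+1)) (y : Fin (n+1) → Fin m) :
    (∏ j, q ((upd hm i y) j)) = (∏ j, q (y j)) * (q (scc hm (y i)) / q (y i)) := by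
  classical
  have h1 : ∀ (b : Fin m), ∏ j, q ((Function.update y i b) j) = q b * ∏ j ∈ univ \ {i}, q (y j) := by
    intro b
    rw [show (fun j => q (Function.update y i b j)) = Function.update (fun j => q (y j)) i (q b) by
      funext j; simp [Function.update_apply, apply_ite q]]
    exact Finset.prod_update_of_mem (Finset.mem_univ i) _ _
  have h2 : ∏ j, q (y j) = q (y i) * ∏ j ∈ univ \ {i}, q (y j) := by
    conv_lhs => rw [show y = Function.update y i (y i) by simp]
    exact h1 (y i)
  rw [upd, h1, h2]
  field_simp [(hq0 (y i)).ne']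

end Aux18

section Core18
open Finset

set_option maxHeartbeats 2000000 in
private lemma core (m n : ℕ) (hm : 2 ≤ m)
    (q : Fin m → ℝ) (hq0 : ∀ a, 0 ≤ q a) (hq1 : ∑ a, q a = 1)
    (t : ℝ) (ht : 1 ≤ t)
    (c : ℝ) (hc0 : 0 < c) (hc1 : c < 1)
    (hn1 : (m:ℝ) * t + 1 ≤ 0.1 * n)
    (huv : 1.5 * m^2 * (t + 2*m) / (n+1) + c * m^2 * (n+1) / (4 * t^2) ≤ 1 - c) :
    c * m * ∑ y ∈ (univ.filter (fun y : Fin (n+1) → Fin m =>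
        (∑ i, (y i).val) % m = 0 ∧ ∀ l : Fin m,
          |((univ.filter fun i => y i = l).card : ℝ) - (n:ℝ)/m| ≤ 0.1 * (n:ℝ) / m)),
      (∏ i, q (y i)) ≤ 1 := by
  classical
  have hm0 : 0 < m := by omega
  have hmR : (2:ℝ) ≤ m := by exact_mod_cast hm
  have hmpos : (0:ℝ) < m := by linarith
  have htpos : (0:ℝ) < t := by linarith
  have hnpos : (0:ℝ) < (n:ℝ) + 1 := by positivity
  set W : (Fin (n+1) → Fin m) → ℝ := fun y => ∏ i, q (y i) with hW
  have hWnn : ∀ y, 0 ≤ W y := fun y => Finset.prod_nonneg fun i _ => hq0 (y i)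
  set u : ℝ := 1.5 * m^2 * (t + 2*m) / (n+1) with hu
  set v : ℝ := c * m^2 * (n+1) / (4 * t^2) with hv
  have hupos : 0 ≤ u := by positivity
  have hvpos : 0 ≤ v := by positivity
  set ε : ℝ := 1.5 * m * (t + 2*m) / (n+1) with hε
  have hεpos : 0 ≤ ε := by positivity
  have hεu : (m:ℝ) * ε = u := by rw [hε, hu]; field_simp
  have hεle : ε ≤ u := by nlinarith
  have hε1 : ε ≤ 1 - c := by nlinarith
  have hεid : ε * ((n:ℝ)+1) = 1.5*m*(t+2*m) := by rw [hε]; field_simp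
  -- predicates
  set pD : ℕ → (Fin (n+1) → Fin m) → Prop := fun j y => ∀ a : Fin m,
    |((univ.filter fun i => y i = a).card : ℝ) - ((n:ℝ)+1) * q a| ≤ t + 2*(j:ℝ) with hpD
  set C : ℕ → Finset (Fin (n+1) → Fin m) := fun j =>
    univ.filter (fun y => (∑ i, (y i).val) % m = j ∧ pD j y) with hC
  set A : Finset (Fin (n+1) → Fin m) :=
    univ.filter (fun y : Fin (n+1) → Fin m =>
        (∑ i, (y i).val) % m = 0 ∧ ∀ l : Fin m,
          |((univ.filter fun i => y i = l).card : ℝ) - (n:ℝ)/m| ≤ 0.1 * (n:ℝ) / m) with hA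
  -- Chebyshev tail
  have cheb : ∀ a : Fin m,
      ∑ y ∈ univ.filter (fun y : Fin (n+1) → Fin m =>
        t < |((univ.filter fun i => y i = a).card : ℝ) - ((n:ℝ)+1) * q a|), W y
      ≤ ((n:ℝ)+1) / (4 * t^2) := by
    intro a
    have hq_le1 : q a ≤ 1 := by
      calc q a ≤ ∑ b, q b := Finset.single_le_sum (fun b _ => hq0 b) (Finset.mem_univ a)
        _ = 1 := hq1
    have hvar := variance (n := n) q hq1 a
    set X : (Fin (n+1) → Fin m) → ℝ :=
      fun y => ((univ.filter fun i => y i = a).card : ℝ) - ((n:ℝ)+1) * q a with hX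
    set S : ℝ := ∑ y ∈ univ.filter (fun y : Fin (n+1) → Fin m => t < |X y|), W y with hS
    have h1 : t^2 * S ≤ ((n:ℝ)+1) * (q a * (1 - q a)) := by
      rw [hS, Finset.mul_sum]
      calc ∑ y ∈ univ.filter (fun y : Fin (n+1) → Fin m => t < |X y|), t^2 * W y
          ≤ ∑ y ∈ univ.filter (fun y : Fin (n+1) → Fin m => t < |X y|), W y * (X y)^2 := by
            apply Finset.sum_le_sum
            intro y hy
            have hy2 := (Finset.mem_filter.mp hy).2
            have habs : t^2 ≤ (X y)^2 := by
              nlinarith [hy2, htpos, sq_abs (X y), abs_nonneg (X y)]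
            nlinarith [hWnn y, habs, sq_nonneg (X y)]
        _ ≤ ∑ y : Fin (n+1) → Fin m, W y * (X y)^2 := by
            apply Finset.sum_le_sum_of_subset_of_nonneg (Finset.filter_subset _ _)
            intro y _ _
            exact mul_nonneg (hWnn y) (sq_nonneg _)
        _ = ((n:ℝ)+1) * (q a * (1 - q a)) := by
            rw [← hvar]
    have hSnn : 0 ≤ S := by
      rw [hS]
      exact Finset.sum_nonneg fun y _ => hWnn y
    rw [le_div_iff₀ (by positivity : (0:ℝ) < 4 * t^2)]
    nlinarith [h1, hq_le1, hq0 a, hnpos, mul_nonneg hnpos.le (sq_nonneg (1 - 2*q a))]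
  have tail : ∑ y ∈ univ.filter (fun y : Fin (n+1) → Fin m => ¬ pD 0 y), W y
      ≤ (m:ℝ) * (((n:ℝ)+1) / (4 * t^2)) := by
    calc ∑ y ∈ univ.filter (fun y : Fin (n+1) → Fin m => ¬ pD 0 y), W y
        ≤ ∑ y ∈ univ.filter (fun y : Fin (n+1) → Fin m => ¬ pD 0 y),
            ∑ a : Fin m, (if t < |((univ.filter fun i => y i = a).card : ℝ) - ((n:ℝ)+1) * q a|
              then W y else 0) := by
          apply Finset.sum_le_sum
          intro y hy
          have hy2 := (Finset.mem_filter.mp hy).2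
          simp only [hpD] at hy2
          push_neg at hy2
          obtain ⟨a, ha⟩ := hy2
          have ha' : t < |((univ.filter fun i => y i = a).card : ℝ) - ((n:ℝ)+1) * q a| := by
            push_cast at ha ⊢
            linarith
          calc W y = (if t < |((univ.filter fun i => y i = a).card : ℝ) - ((n:ℝ)+1) * q a|
                then W y else 0) := by rw [if_pos ha']
            _ ≤ _ := Finset.single_le_sum (f := fun a =>
                (if t < |((univ.filter fun i => y i = a).card : ℝ) - ((n:ℝ)+1) * q a|
                  then W y else 0))
                (fun b _ => by beta_reduce; split_ifs <;> simp [hWnn y]) (Finset.mem_univ a)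
      _ ≤ ∑ y : Fin (n+1) → Fin m,
            ∑ a : Fin m, (if t < |((univ.filter fun i => y i = a).card : ℝ) - ((n:ℝ)+1) * q a|
              then W y else 0) := by
          apply Finset.sum_le_sum_of_subset_of_nonneg (Finset.filter_subset _ _)
          intro y _ _
          apply Finset.sum_nonneg
          intro a _
          split_ifs <;> simp [hWnn y]
      _ = ∑ a : Fin m, ∑ y ∈ univ.filter (fun y : Fin (n+1) → Fin m =>
            t < |((univ.filter fun i => y i = a).card : ℝ) - ((n:ℝ)+1) * q a|), W y := by
          rw [Finset.sum_comm]
          exact Finset.sum_congr rfl fun a _ => (Finset.sum_filter _ _).symm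
      _ ≤ ∑ a : Fin m, ((n:ℝ)+1) / (4 * t^2) := Finset.sum_le_sum fun a _ => cheb a
      _ = (m:ℝ) * (((n:ℝ)+1) / (4 * t^2)) := by
          rw [Finset.sum_const, Finset.card_univ, Fintype.card_fin, nsmul_eq_mul]
  -- split
  have hsplit : ∑ y ∈ A, W y ≤ ∑ y ∈ A.filter (pD 0), W y
      + ∑ y ∈ univ.filter (fun y => ¬ pD 0 y), W y := by
    rw [← Finset.sum_filter_add_sum_filter_not A (pD 0) W]
    have : ∑ y ∈ A.filter (fun y => ¬ pD 0 y), W y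
        ≤ ∑ y ∈ univ.filter (fun y => ¬ pD 0 y), W y := by
      apply Finset.sum_le_sum_of_subset_of_nonneg
      · intro y hy
        rw [Finset.mem_filter] at hy ⊢
        exact ⟨Finset.mem_univ y, hy.2⟩
      · intro y _ _; exact hWnn y
    linarith
  have hAD_C : A.filter (pD 0) ⊆ C 0 := by
    intro y hy
    rw [Finset.mem_filter] at hy
    rw [hC, Finset.mem_filter]
    have hyA := (Finset.mem_filter.mp hy.1).2
    exact ⟨Finset.mem_univ y, hyA.1, hy.2⟩
  have hcmtail : c * m * ((m:ℝ) * (((n:ℝ)+1) / (4 * t^2))) = v := by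
    rw [hv]; field_simp
  by_cases hne : (A.filter (pD 0)).Nonempty
  · -- witness gives bounds on q
    obtain ⟨y₀, hy₀⟩ := hne
    have hy₀A := (Finset.mem_filter.mp (Finset.mem_filter.mp hy₀).1).2
    have hy₀D : pD 0 y₀ := (Finset.mem_filter.mp hy₀).2
    have hqbdd : ∀ a : Fin m, 0.8 / m ≤ q a ∧ q a ≤ 1.2 / m := by
      intro a
      have h1 := hy₀D a
      have h2 := hy₀A.2 a
      simp only [Nat.cast_zero, mul_zero, add_zero] at h1
      rw [abs_le] at h1 h2
      set k : ℝ := ((univ.filter fun i => y₀ i = a).card : ℝ) with hk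
      have e1 : (m:ℝ) * ((n:ℝ)/m) = n := by field_simp
      have e2 : (m:ℝ) * (0.1*(n:ℝ)/m) = 0.1*n := by field_simp
      have h2a : (m:ℝ) * (k - (n:ℝ)/m) ≤ m * (0.1*(n:ℝ)/m) :=
        mul_le_mul_of_nonneg_left h2.2 hmpos.le
      have h2b : (m:ℝ) * (-(0.1*(n:ℝ)/m)) ≤ m * (k - (n:ℝ)/m) :=
        mul_le_mul_of_nonneg_left h2.1 hmpos.le
      have h2a' : (m:ℝ) * k ≤ (n:ℝ) + 0.1*n := by nlinarith [h2a, e1, e2]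
      have h2b' : (n:ℝ) - 0.1*n ≤ (m:ℝ) * k := by nlinarith [h2b, e1, e2]
      constructor
      · rw [div_le_iff₀ hmpos]
        nlinarith [h1.1, h1.2, h2b', hn1, hnpos, mul_le_mul_of_nonneg_left h1.1 hmpos.le]
      · rw [le_div_iff₀ hmpos]
        nlinarith [h1.1, h1.2, h2a', hn1, hnpos, mul_le_mul_of_nonneg_left h1.2 hmpos.le]
    have hlo : ∀ a, 0.8 / (m:ℝ) ≤ q a := fun a => (hqbdd a).1
    have hhi : ∀ a, q a ≤ 1.2 / (m:ℝ) := fun a => (hqbdd a).2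
    have hq0' : ∀ a, 0 < q a := fun a => lt_of_lt_of_le (div_pos (by norm_num) hmpos) (hlo a)
    -- step lemma
    have step : ∀ j : ℕ, j + 1 < m →
        (1 - ε) * ∑ y ∈ C j, W y ≤ ∑ y ∈ C (j+1), W y := by
      intro j hj
      have himg : ∀ (i : Fin (n+1)) (y : Fin (n+1) → Fin m),
          y ∈ C j → upd hm0 i y ∈ C (j+1) := by
        intro i y hy
        rw [hC] at hy ⊢
        rw [Finset.mem_filter] at hy ⊢
        obtain ⟨-, hres, hDj⟩ := hy
        refine ⟨Finset.mem_univ _, ?_, ?_⟩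
        · rw [upd_sum_mod hm0 i y, Nat.add_mod, hres,
            Nat.mod_eq_of_lt (show 1 < m by omega),
            Nat.mod_eq_of_lt (show j + 1 < m from hj)]
        · intro a
          have hc := upd_cnt hm0 i y a
          have hDja := hDj a
          have hcast1 : ((univ.filter fun i' => (upd hm0 i y) i' = a).card : ℝ)
              ≤ ((univ.filter fun i' => y i' = a).card : ℝ) + 1 := by exact_mod_cast hc.1
          have hcast2 : ((univ.filter fun i' => y i' = a).card : ℝ)
              ≤ ((univ.filter fun i' => (upd hm0 i y) i' = a).card : ℝ) + 1 := by
            exact_mod_cast hc.2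
          rw [abs_le] at hDja ⊢
          push_cast at hDja ⊢
          constructor
          · linarith [hDja.1]
          · linarith [hDja.2]
      have perY : ∀ y ∈ C j, ((n:ℝ)+1) * ((1-ε) * W y) ≤ ∑ i, W (upd hm0 i y) := by
        intro y hy
        rw [hC, Finset.mem_filter] at hy
        obtain ⟨-, -, hDj⟩ := hy
        have h1 : ∑ i, W (upd hm0 i y)
            = W y * ∑ a, ((univ.filter fun i => y i = a).card : ℝ) * (q (scc hm0 a) / q a) := by
          calc ∑ i, W (upd hm0 i y) = ∑ i, W y * (q (scc hm0 (y i)) / q (y i)) :=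
                Finset.sum_congr rfl fun i _ => wt_upd hm0 q hq0' i y
            _ = W y * ∑ i, (q (scc hm0 (y i)) / q (y i)) := by rw [Finset.mul_sum]
            _ = _ := by rw [sum_comp_cnt y (fun a => q (scc hm0 a) / q a)]
        rw [h1]
        have hrationn : ∀ a : Fin m, 0 ≤ q (scc hm0 a) / q a := fun a =>
          div_nonneg (hq0 _) (hq0 _)
        have hterm : ∀ a : Fin m, (((n:ℝ)+1) * q a - (t + 2*(j:ℝ))) * (q (scc hm0 a) / q a)
            ≤ ((univ.filter fun i => y i = a).card : ℝ) * (q (scc hm0 a) / q a) := by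
          intro a
          apply mul_le_mul_of_nonneg_right _ (hrationn a)
          linarith [(abs_le.mp (hDj a)).1]
        have hqs : ∑ a, q a * (q (scc hm0 a) / q a) = 1 := by
          rw [Finset.sum_congr rfl fun a _ =>
            (by rw [mul_comm, div_mul_cancel₀ _ (hq0' a).ne'] :
              q a * (q (scc hm0 a) / q a) = q (scc hm0 a))]
          rw [Fintype.sum_bijective (scc hm0)
            ((Finite.injective_iff_bijective).mp (scc_inj hm0)) _ q (fun a => rfl)]
          exact hq1
        have hratio : ∑ a, q (scc hm0 a) / q a ≤ 1.5 * m := by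
          calc ∑ a, q (scc hm0 a) / q a ≤ ∑ _a : Fin m, (1.5:ℝ) := by
                apply Finset.sum_le_sum
                intro a _
                rw [div_le_iff₀ (hq0' a)]
                calc q (scc hm0 a) ≤ 1.2/(m:ℝ) := hhi (scc hm0 a)
                  _ = 1.5 * (0.8/(m:ℝ)) := by ring
                  _ ≤ 1.5 * q a := by nlinarith [hlo a]
            _ = 1.5 * m := by
                rw [Finset.sum_const, Finset.card_univ, Fintype.card_fin, nsmul_eq_mul]
                ring
        have hrationn' : 0 ≤ ∑ a, q (scc hm0 a) / q a :=
          Finset.sum_nonneg fun a _ => hrationn a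
        have hjm : (j:ℝ) ≤ m := by
          have : (j:ℕ) ≤ m := by omega
          exact_mod_cast this
        have hsum_lb : ((n:ℝ)+1) * (1-ε)
            ≤ ∑ a, ((univ.filter fun i => y i = a).card : ℝ) * (q (scc hm0 a) / q a) := by
          have hstep1 := Finset.sum_le_sum (s := univ) (fun a _ => hterm a)
          have hexp : ∑ a, (((n:ℝ)+1) * q a - (t + 2*(j:ℝ))) * (q (scc hm0 a) / q a)
              = ((n:ℝ)+1) * ∑ a, q a * (q (scc hm0 a)/q a)
                - (t + 2*(j:ℝ)) * ∑ a, q (scc hm0 a)/q a := by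
            rw [Finset.mul_sum, Finset.mul_sum, ← Finset.sum_sub_distrib]
            exact Finset.sum_congr rfl fun a _ => by ring
          rw [hexp, hqs] at hstep1
          have hmono : (t + 2*(j:ℝ)) * ∑ a, q (scc hm0 a)/q a ≤ (t + 2*(m:ℝ)) * (1.5*m) := by
            have h1' : (t + 2*(j:ℝ)) * ∑ a, q (scc hm0 a)/q a ≤ (t + 2*(j:ℝ)) * (1.5*m) :=
              mul_le_mul_of_nonneg_left hratio (by linarith)
            have h2' : (t + 2*(j:ℝ)) * (1.5*m) ≤ (t + 2*(m:ℝ)) * (1.5*m) := by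
              apply mul_le_mul_of_nonneg_right _ (by positivity)
              linarith
            linarith
          have hfin : ((n:ℝ)+1) * (1-ε) = ((n:ℝ)+1) * 1 - (t + 2*(m:ℝ)) * (1.5*m) := by
            have hh : ((n:ℝ)+1) * ε = 1.5*m*(t+2*m) := by
              rw [mul_comm]; exact hεid
            have : ((n:ℝ)+1) * (1-ε) = ((n:ℝ)+1) - ((n:ℝ)+1) * ε := by ring
            rw [this, hh]; ring
          rw [hfin]
          linarith
        calc ((n:ℝ)+1) * ((1-ε) * W y) = (((n:ℝ)+1) * (1-ε)) * W y := by ring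
          _ ≤ (∑ a, ((univ.filter fun i => y i = a).card : ℝ) * (q (scc hm0 a) / q a)) * W y :=
              mul_le_mul_of_nonneg_right hsum_lb (hWnn y)
          _ = W y * ∑ a, ((univ.filter fun i => y i = a).card : ℝ) * (q (scc hm0 a) / q a) := by
              ring
      have big : ((n:ℝ)+1) * ((1-ε) * ∑ y ∈ C j, W y)
          ≤ ((n:ℝ)+1) * ∑ y ∈ C (j+1), W y := by
        calc ((n:ℝ)+1) * ((1-ε) * ∑ y ∈ C j, W y)
            = ∑ y ∈ C j, ((n:ℝ)+1) * ((1-ε) * W y) := by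
              rw [Finset.mul_sum, Finset.mul_sum]
          _ ≤ ∑ y ∈ C j, ∑ i, W (upd hm0 i y) := Finset.sum_le_sum perY
          _ = ∑ i : Fin (n+1), ∑ y ∈ C j, W (upd hm0 i y) := Finset.sum_comm
          _ ≤ ∑ i : Fin (n+1), ∑ z ∈ C (j+1), W z := by
              apply Finset.sum_le_sum
              intro i _
              have himg_sum : ∑ y ∈ C j, W (upd hm0 i y)
                  = ∑ z ∈ (C j).image (upd hm0 i), W z :=
                (Finset.sum_image (fun x _ y _ h => upd_inj hm0 i h)).symm
              rw [himg_sum]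
              apply Finset.sum_le_sum_of_subset_of_nonneg
              · rw [Finset.image_subset_iff]
                intro y hy
                exact himg i y hy
              · intro z _ _
                exact hWnn z
          _ = ((n:ℝ)+1) * ∑ z ∈ C (j+1), W z := by
              rw [Finset.sum_const, Finset.card_univ, Fintype.card_fin, nsmul_eq_mul]
              push_cast
              ring
      exact le_of_mul_le_mul_left big hnpos
    have hεle1 : 0 ≤ 1 - ε := by linarith
    -- chain
    have chain : ∀ j : ℕ, j < m → (1 - ε)^j * ∑ y ∈ C 0, W y ≤ ∑ y ∈ C j, W y := by
      intro j
      induction j with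
      | zero => intro _; simp
      | succ k ih =>
        intro hk
        have hk' : k < m := by omega
        calc (1-ε)^(k+1) * ∑ y ∈ C 0, W y = (1-ε) * ((1-ε)^k * ∑ y ∈ C 0, W y) := by ring
          _ ≤ (1-ε) * ∑ y ∈ C k, W y := mul_le_mul_of_nonneg_left (ih hk') hεle1
          _ ≤ ∑ y ∈ C (k+1), W y := step k hk
    -- disjointness
    have hdisj : ∑ j ∈ Finset.range m, ∑ y ∈ C j, W y ≤ 1 := by
      have h1 : ∀ y : Fin (n+1) → Fin m,
          ∑ j ∈ Finset.range m,
            (if (∑ i, (y i).val) % m = j ∧ pD j y then W y else 0) ≤ W y := by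
        intro y
        calc ∑ j ∈ Finset.range m, (if (∑ i, (y i).val) % m = j ∧ pD j y then W y else 0)
            ≤ ∑ j ∈ Finset.range m, (if j = (∑ i, (y i).val) % m then W y else 0) := by
              apply Finset.sum_le_sum
              intro j _
              by_cases h : (∑ i, (y i).val) % m = j ∧ pD j y
              · rw [if_pos h, if_pos h.1.symm]
              · rw [if_neg h]
                split_ifs <;> simp [hWnn y]
          _ = W y := by
              rw [Finset.sum_ite_eq' (Finset.range m) ((∑ i, (y i).val) % m) (fun _ => W y)]
              rw [if_pos (Finset.mem_range.mpr (Nat.mod_lt _ hm0))]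
      calc ∑ j ∈ Finset.range m, ∑ y ∈ C j, W y
          = ∑ j ∈ Finset.range m, ∑ y : Fin (n+1) → Fin m,
              (if (∑ i, (y i).val) % m = j ∧ pD j y then W y else 0) := by
            refine Finset.sum_congr rfl fun j _ => ?_
            rw [hC, Finset.sum_filter]
        _ = ∑ y : Fin (n+1) → Fin m, ∑ j ∈ Finset.range m,
              (if (∑ i, (y i).val) % m = j ∧ pD j y then W y else 0) := Finset.sum_comm
        _ ≤ ∑ y : Fin (n+1) → Fin m, W y := Finset.sum_le_sum fun y _ => h1 y
        _ = 1 := total_mass q hq1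
    -- combine
    have hP0nn : 0 ≤ ∑ y ∈ C 0, W y := Finset.sum_nonneg fun y _ => hWnn y
    have hmain : (m:ℝ) * ((1-ε)^(m-1) * ∑ y ∈ C 0, W y) ≤ 1 := by
      calc (m:ℝ) * ((1-ε)^(m-1) * ∑ y ∈ C 0, W y)
          = ∑ _j ∈ Finset.range m, (1-ε)^(m-1) * ∑ y ∈ C 0, W y := by
            rw [Finset.sum_const, Finset.card_range, nsmul_eq_mul]
        _ ≤ ∑ j ∈ Finset.range m, ∑ y ∈ C j, W y := by
            apply Finset.sum_le_sum
            intro j hj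
            have hjm : j < m := Finset.mem_range.mp hj
            calc (1-ε)^(m-1) * ∑ y ∈ C 0, W y ≤ (1-ε)^j * ∑ y ∈ C 0, W y := by
                  apply mul_le_mul_of_nonneg_right _ hP0nn
                  exact pow_le_pow_of_le_one hεle1 (by linarith) (by omega)
              _ ≤ ∑ y ∈ C j, W y := chain j hjm
        _ ≤ 1 := hdisj
    have hBern : 1 - u ≤ (1-ε)^(m-1) := by
      have h2 : (-2:ℝ) ≤ -ε := by linarith
      have hb := one_add_mul_le_pow h2 (m-1)
      have hcast : ((m-1:ℕ):ℝ) = (m:ℝ) - 1 := by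
        rw [Nat.cast_sub (by omega : 1 ≤ m)]
        norm_num
      rw [hcast] at hb
      have hb' : 1 - ((m:ℝ)-1) * ε ≤ (1-ε)^(m-1) := by
        calc 1 - ((m:ℝ)-1) * ε = 1 + ((m:ℝ)-1) * (-ε) := by ring
          _ ≤ (1 + -ε)^(m-1) := hb
          _ = (1-ε)^(m-1) := by ring_nf
      have : 1 - u ≤ 1 - ((m:ℝ)-1) * ε := by nlinarith [hεpos, hεu]
      linarith
    have hBpos : 0 < (1-ε)^(m-1) := by
      have hcv : c + v ≤ (1-ε)^(m-1) := by linarith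
      linarith [hvpos, hc0]
    -- final
    have hAbound : ∑ y ∈ A, W y ≤ ∑ y ∈ C 0, W y + (m:ℝ) * (((n:ℝ)+1) / (4 * t^2)) := by
      have h1 : ∑ y ∈ A.filter (pD 0), W y ≤ ∑ y ∈ C 0, W y :=
        Finset.sum_le_sum_of_subset_of_nonneg hAD_C (fun y _ _ => hWnn y)
      linarith [hsplit, tail]
    have hcmP0 : c * m * ∑ y ∈ C 0, W y ≤ c / (1-ε)^(m-1) := by
      rw [le_div_iff₀ hBpos]
      nlinarith [hmain, hc0]
    have hlast : c / (1-ε)^(m-1) ≤ 1 - v := by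
      rw [div_le_iff₀ hBpos]
      nlinarith [hBern, hupos, hvpos, huv, mul_nonneg hupos hvpos]
    calc c * m * ∑ y ∈ A, W y
        ≤ c * m * (∑ y ∈ C 0, W y + (m:ℝ) * (((n:ℝ)+1) / (4 * t^2))) := by
          apply mul_le_mul_of_nonneg_left hAbound (by positivity)
      _ = c * m * ∑ y ∈ C 0, W y + c * m * ((m:ℝ) * (((n:ℝ)+1) / (4 * t^2))) := by ring
      _ ≤ c / (1-ε)^(m-1) + v := by rw [hcmtail] at *; linarith [hcmP0]
      _ ≤ 1 := by linarith [hlast]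
  · -- A ∩ D₀ empty
    rw [Finset.not_nonempty_iff_eq_empty] at hne
    have hle : ∑ y ∈ A, W y ≤ (m:ℝ) * (((n:ℝ)+1) / (4 * t^2)) := by
      calc ∑ y ∈ A, W y ≤ _ + _ := hsplit
        _ ≤ (m:ℝ) * (((n:ℝ)+1) / (4 * t^2)) := by rw [hne]; simpa using tail
    calc c * m * ∑ y ∈ A, W y ≤ c * m * ((m:ℝ) * (((n:ℝ)+1) / (4 * t^2))) := by
          apply mul_le_mul_of_nonneg_left hle (by positivity)
      _ = v := hcmtail
      _ ≤ 1 := by nlinarith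


end Core18

open Finset in
set_option maxHeartbeats 4000000 in
/-- For `c ∈ (0,1)` and `m ≥ 2`, for all sufficiently large `n` the function taking value
`c·m` on sequences whose label sum is divisible by `m` and whose label counts are all within
`10%` of `n/m`, and `0` otherwise, is a randomness e-variable on `{0,…,m−1}^{n+1}`. -/
theorem stmt18 (c : ℝ) (hc : c ∈ Set.Ioo (0:ℝ) 1) (m : ℕ) (hm : 2 ≤ m) :
    ∃ N : ℕ, ∀ n : ℕ, N ≤ n →
      IsRandE n (fun y : Fin (n+1) → Fin m =>
        if (∑ i, (y i).val) % m = 0 ∧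
            (∀ l : Fin m,
              |((Finset.univ.filter fun i => y i = l).card : ℝ) - (n : ℝ) / (m : ℝ)|
                ≤ 0.1 * (n : ℝ) / (m : ℝ))
        then ENNReal.ofReal (c * (m : ℝ)) else 0) := by
  classical
  obtain ⟨hc0, hc1⟩ := hc
  have h1c : (0:ℝ) < 1 - c := by linarith
  have hmR : (2:ℝ) ≤ m := by exact_mod_cast hm
  have hmpos : (0:ℝ) < m := by linarith
  set K : ℝ := 6*(m:ℝ)^2/(1-c) with hKdef
  have hK0 : 0 < K := by
    apply div_pos _ h1c
    positivity
  have hKval1 : 1.5*(m:ℝ)^2/K = (1-c)/4 := by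
    rw [hKdef]
    field_simp
    ring
  have hmK : (m:ℝ)/K ≤ 1/12 := by
    rw [hKdef]
    rw [div_div_eq_mul_div, div_le_div_iff₀ (by positivity) (by norm_num)]
    nlinarith
  set D : ℝ := 3*(m:ℝ)^3 + c*(m:ℝ)^2*K^2/4 with hDdef
  have hD0 : 0 ≤ D := by positivity
  set R : ℝ := max (max K 66) (D/((3/4)*(1-c))) with hRdef
  have hev : ∀ᶠ n : ℕ in Filter.atTop, R ≤ (n:ℝ)+1 :=
    (Filter.tendsto_atTop_add_const_right Filter.atTop 1
      tendsto_natCast_atTop_atTop).eventually_ge_atTop R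
  obtain ⟨N, hN⟩ := Filter.eventually_atTop.mp hev
  refine ⟨N, fun n hn => ?_⟩
  have hxR : R ≤ (n:ℝ)+1 := hN n hn
  set x : ℝ := (n:ℝ)+1 with hxdef
  have hx0 : (0:ℝ) < x := by positivity
  have hxK : K ≤ x := le_trans (le_trans (le_max_left _ _) (le_max_left _ _)) hxR
  have hx66 : (66:ℝ) ≤ x := le_trans (le_trans (le_max_right _ _) (le_max_left _ _)) hxR
  have hxD : D/((3/4)*(1-c)) ≤ x := le_trans (le_max_right _ _) hxR
  set t : ℝ := x/K with htdef
  have ht1 : 1 ≤ t := by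
    rw [htdef, le_div_iff₀ hK0]
    linarith
  have hn1 : (m:ℝ)*t + 1 ≤ 0.1*n := by
    have h1 : (m:ℝ)*t = ((m:ℝ)/K)*x := by rw [htdef]; ring
    have h2 : ((m:ℝ)/K)*x ≤ (1/12)*x := by
      apply mul_le_mul_of_nonneg_right hmK hx0.le
    have h3 : (n:ℝ) = x - 1 := by rw [hxdef]; ring
    rw [h1, h3]
    linarith
  have huv : 1.5 * (m:ℝ)^2 * (t + 2*m) / ((n:ℝ)+1)
      + c * (m:ℝ)^2 * ((n:ℝ)+1) / (4 * t^2) ≤ 1 - c := by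
    have hexpand : 1.5 * (m:ℝ)^2 * (t + 2*m) / x + c * (m:ℝ)^2 * x / (4 * t^2)
        = 1.5*(m:ℝ)^2/K + D/x := by
      rw [htdef, hDdef]
      field_simp [hx0.ne', hK0.ne']
      ring
    have hDx : D/x ≤ (3/4)*(1-c) := by
      rw [div_le_iff₀ hx0]
      have h4 : ((3/4)*(1-c)) * (D/((3/4)*(1-c))) = D := by
        field_simp [h1c.ne']
      nlinarith [mul_le_mul_of_nonneg_left hxD (by positivity : (0:ℝ) ≤ (3/4)*(1-c))]
    calc 1.5 * (m:ℝ)^2 * (t + 2*m) / ((n:ℝ)+1) + c * (m:ℝ)^2 * ((n:ℝ)+1) / (4 * t^2)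
        = 1.5*(m:ℝ)^2/K + D/x := hexpand
      _ ≤ (1-c)/4 + (3/4)*(1-c) := by rw [hKval1]; linarith
      _ = 1 - c := by ring
  haveI hsing : MeasurableSingletonClass (Fin (n+1) → Fin m) := by
    constructor
    intro y
    rw [← Set.univ_pi_singleton y]
    exact MeasurableSet.univ_pi fun i => measurableSet_singleton _
  constructor
  · exact measurable_of_countable _
  · intro Q hQ
    rw [MeasureTheory.lintegral_fintype]
    set q : Fin m → ℝ := fun a => (Q {a}).toReal with hqdef
    have hq0 : ∀ a, 0 ≤ q a := fun a => ENNReal.toReal_nonneg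
    have hqfin : ∀ a : Fin m, Q {a} ≠ ⊤ := fun a => measure_ne_top Q _
    have hofReal : ∀ a : Fin m, Q {a} = ENNReal.ofReal (q a) := fun a =>
      (ENNReal.ofReal_toReal (hqfin a)).symm
    have hsumQ : ∑ a : Fin m, Q {a} = 1 := by
      have h : ⋃ a ∈ (Finset.univ : Finset (Fin m)), ({a} : Set (Fin m)) = Set.univ := by
        ext z; simp
      rw [← measure_biUnion_finset (by simp [Set.PairwiseDisjoint, Set.Pairwise, Function.onFun])
        (fun b _ => measurableSet_singleton b), h, measure_univ]
    have hq1 : ∑ a, q a = 1 := by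
      rw [hqdef]
      rw [← ENNReal.toReal_sum (fun a _ => hqfin a), hsumQ]
      simp
    have hsingle : ∀ y : Fin (n+1) → Fin m,
        (Measure.pi fun _ : Fin (n+1) => Q) {y} = ENNReal.ofReal (∏ i, q (y i)) := by
      intro y
      rw [← Set.univ_pi_singleton y, Measure.pi_pi]
      rw [ENNReal.ofReal_prod_of_nonneg (fun i _ => hq0 (y i))]
      exact Finset.prod_congr rfl fun i _ => hofReal (y i)
    have hterm : ∀ y : Fin (n+1) → Fin m,
        (if (∑ i, (y i).val) % m = 0 ∧
            (∀ l : Fin m,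
              |((Finset.univ.filter fun i => y i = l).card : ℝ) - (n : ℝ) / (m : ℝ)|
                ≤ 0.1 * (n : ℝ) / (m : ℝ))
          then ENNReal.ofReal (c * (m : ℝ)) else 0) * (Measure.pi fun _ : Fin (n+1) => Q) {y}
        = ENNReal.ofReal (if (∑ i, (y i).val) % m = 0 ∧
            (∀ l : Fin m,
              |((Finset.univ.filter fun i => y i = l).card : ℝ) - (n : ℝ) / (m : ℝ)|
                ≤ 0.1 * (n : ℝ) / (m : ℝ))
          then c * (m : ℝ) * ∏ i, q (y i) else 0) := by
      intro y
      rw [hsingle y]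
      split_ifs with h
      · rw [← ENNReal.ofReal_mul (by positivity)]
      · rw [zero_mul, ENNReal.ofReal_zero]
    rw [Finset.sum_congr rfl fun y _ => hterm y]
    rw [← ENNReal.ofReal_sum_of_nonneg (fun y _ => by
      split_ifs with h
      · exact mul_nonneg (by positivity) (Finset.prod_nonneg fun i _ => hq0 (y i))
      · exact le_refl 0)]
    apply ENNReal.ofReal_le_one.mpr
    have hsum_eq : ∑ y : Fin (n+1) → Fin m,
        (if (∑ i, (y i).val) % m = 0 ∧
            (∀ l : Fin m,
              |((Finset.univ.filter fun i => y i = l).card : ℝ) - (n : ℝ) / (m : ℝ)|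
                ≤ 0.1 * (n : ℝ) / (m : ℝ))
          then c * (m : ℝ) * ∏ i, q (y i) else 0)
        = c * m * ∑ y ∈ (univ.filter (fun y : Fin (n+1) → Fin m =>
            (∑ i, (y i).val) % m = 0 ∧ ∀ l : Fin m,
              |((univ.filter fun i => y i = l).card : ℝ) - (n:ℝ)/m| ≤ 0.1 * (n:ℝ) / m)),
          (∏ i, q (y i)) := by
      rw [Finset.sum_filter, Finset.mul_sum]
      exact Finset.sum_congr rfl fun y _ => by split_ifs <;> simp
    rw [hsum_eq]
    exact core m n hm q hq0 hq1 t ht1 c hc0 hc1 hn1 huv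

end
end
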